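/- arXiv:2409.10663 — 3 statements merged into one kernel-verified Lean document; each statement's English description precedes it below -/
import Mathlib

section
/- Let u ≥ 1 and x ≥ z^u with z > 1. Then the number of integers n ≤ x whose z-smooth part ∏_{p ≤ z, p^α ∥ n} p^α exceeds z^u is O(x·e^{−u/2}), with an absolute implied constant. -/
/-- The `z`-smooth part of `n`: the product of the prime powers `p ^ α` exactly
dividing `n` with `p ≤ z`. -/
noncomputable def smoothPart (z : ℝ) (n : ℕ) : ℕ :=
  ∏ p ∈ n.primeFactors.filter (fun p : ℕ => (p : ℝ) ≤ z), p ^ n.factorization p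

open Finset

namespace SmoothAux

/-- The weight function `h(d) = ∏_{p^a ∥ d} (p^{sa} - p^{s(a-1)})`. -/
noncomputable def Hf (s : ℝ) (d : ℕ) : ℝ :=
  ∏ p ∈ d.primeFactors,
    ((p : ℝ) ^ (s * (d.factorization p : ℝ)) - (p : ℝ) ^ (s * ((d.factorization p : ℝ) - 1)))

lemma Hf_nonneg {s : ℝ} (hs : 0 ≤ s) (d : ℕ) : 0 ≤ Hf s d := by
  apply Finset.prod_nonneg
  intro p hp
  have hp2 : 2 ≤ p := (Nat.prime_of_mem_primeFactors hp).two_le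
  have h1p : (1 : ℝ) ≤ (p : ℝ) := by exact_mod_cast Nat.one_le_of_lt hp2
  have hle : s * ((d.factorization p : ℝ) - 1) ≤ s * (d.factorization p : ℝ) := by nlinarith
  have := Real.rpow_le_rpow_of_exponent_le h1p hle
  linarith

lemma Hf_one (s : ℝ) : Hf s 1 = 1 := by simp [Hf]

noncomputable def HA (s : ℝ) : ArithmeticFunction ℝ :=
  ⟨fun d => if d = 0 then 0 else Hf s d, by simp⟩

lemma HA_apply {s : ℝ} {d : ℕ} (hd : d ≠ 0) : HA s d = Hf s d := if_neg hd

lemma HA_isMultiplicative (s : ℝ) : (HA s).IsMultiplicative := by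
  constructor
  · rw [HA_apply one_ne_zero, Hf_one]
  · intro m n hmn
    rcases eq_or_ne m 0 with rfl | hm
    · have hn1 : n = 1 := by simpa using hmn
      subst hn1
      simp [HA_apply one_ne_zero, Hf_one, show (HA s) 0 = 0 from (HA s).map_zero]
    rcases eq_or_ne n 0 with rfl | hn
    · have hm1 : m = 1 := by simpa using hmn
      subst hm1
      simp [HA_apply one_ne_zero, Hf_one, show (HA s) 0 = 0 from (HA s).map_zero]
    rw [HA_apply (Nat.mul_ne_zero hm hn), HA_apply hm, HA_apply hn]
    unfold Hf
    rw [Nat.primeFactors_mul hm hn, Finset.prod_union hmn.disjoint_primeFactors]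
    congr 1
    · refine Finset.prod_congr rfl fun p hp => ?_
      have hpn : ¬ p ∣ n := by
        intro hdvd
        have hpm : p ∣ m := Nat.dvd_of_mem_primeFactors hp
        have : p ∣ 1 := hmn ▸ Nat.dvd_gcd hpm hdvd
        exact (Nat.prime_of_mem_primeFactors hp).one_lt.ne' (Nat.dvd_one.mp this)
      rw [Nat.factorization_mul hm hn]
      simp [Nat.factorization_eq_zero_of_not_dvd hpn]
    · refine Finset.prod_congr rfl fun p hp => ?_
      have hpm : ¬ p ∣ m := by
        intro hdvd
        have hpn : p ∣ n := Nat.dvd_of_mem_primeFactors hp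
        have : p ∣ 1 := hmn ▸ Nat.dvd_gcd hdvd hpn
        exact (Nat.prime_of_mem_primeFactors hp).one_lt.ne' (Nat.dvd_one.mp this)
      rw [Nat.factorization_mul hm hn]
      simp [Nat.factorization_eq_zero_of_not_dvd hpm]

noncomputable def FA (s : ℝ) : ArithmeticFunction ℝ :=
  ⟨fun n => if n = 0 then 0 else (n : ℝ) ^ s, by simp⟩

lemma FA_apply {s : ℝ} {n : ℕ} (hn : n ≠ 0) : FA s n = (n : ℝ) ^ s := if_neg hn

lemma FA_isMultiplicative (s : ℝ) : (FA s).IsMultiplicative := by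
  constructor
  · rw [FA_apply one_ne_zero]; simp
  · intro m n hmn
    rcases eq_or_ne m 0 with rfl | hm
    · simp [show (FA s) 0 = 0 from (FA s).map_zero]
    rcases eq_or_ne n 0 with rfl | hn
    · simp [show (FA s) 0 = 0 from (FA s).map_zero]
    rw [FA_apply (Nat.mul_ne_zero hm hn), FA_apply hm, FA_apply hn]
    push_cast
    exact Real.mul_rpow (Nat.cast_nonneg m) (Nat.cast_nonneg n)

end SmoothAux

namespace SmoothAux

lemma sum_divisors_Hf {s : ℝ} {n : ℕ} (hn : n ≠ 0) :
    ∑ d ∈ n.divisors, Hf s d = (n : ℝ) ^ s := by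
  have hzeta := (ArithmeticFunction.isMultiplicative_zeta.natCast (R := ℝ)).mul
    (HA_isMultiplicative s)
  have key : (↑ArithmeticFunction.zeta * HA s) = FA s := by
    rw [ArithmeticFunction.IsMultiplicative.eq_iff_eq_on_prime_powers _ hzeta _ (FA_isMultiplicative s)]
    intro p i hp
    rw [ArithmeticFunction.coe_zeta_mul_apply, Nat.sum_divisors_prime_pow hp,
      FA_apply (pow_ne_zero i hp.pos.ne')]
    have hHApow : ∀ j : ℕ, HA s (p ^ (j + 1)) =
        (p : ℝ) ^ (s * ((j + 1 : ℕ) : ℝ)) - (p : ℝ) ^ (s * ((j : ℕ) : ℝ)) := by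
      intro j
      rw [HA_apply (pow_ne_zero (j+1) hp.pos.ne')]
      unfold Hf
      rw [Nat.primeFactors_pow p (Nat.succ_ne_zero j), hp.primeFactors, Finset.prod_singleton,
        Nat.Prime.factorization_pow hp, Finsupp.single_eq_same]
      norm_num
    rw [Finset.sum_range_succ']
    have h0 : HA s (p ^ 0) = 1 := by
      rw [pow_zero, HA_apply one_ne_zero, Hf_one]
    rw [h0]
    have htel : ∑ j ∈ Finset.range i, HA s (p ^ (j + 1)) =
        (p : ℝ) ^ (s * (i : ℝ)) - (p : ℝ) ^ (s * ((0 : ℕ) : ℝ)) := by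
      rw [← Finset.sum_range_sub (fun j : ℕ => (p : ℝ) ^ (s * (j : ℝ))) i]
      refine Finset.sum_congr rfl fun j _ => ?_
      rw [hHApow j]
    rw [htel]
    have hcast : ((p ^ i : ℕ) : ℝ) = (p : ℝ) ^ (i : ℕ) := by push_cast; ring
    rw [hcast, ← Real.rpow_natCast (p : ℝ) i, ← Real.rpow_mul (by positivity)]
    simp [mul_comm]
  have := congrArg (fun f : ArithmeticFunction ℝ => f n) key
  rw [ArithmeticFunction.coe_zeta_mul_apply] at this
  rw [FA_apply hn] at this
  rw [← this]
  exact Finset.sum_congr rfl fun d hd => (HA_apply (Nat.ne_of_gt (Nat.pos_of_mem_divisors hd))).symm 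

end SmoothAux

namespace SmoothAux

lemma prodBound (g : ℕ → ℕ → ℝ) (hg0 : ∀ p, g p 0 = 1) (hgnn : ∀ p a, 0 ≤ g p a) (A : ℕ)
    (P : Finset ℕ) :
    ∀ (D : Finset ℕ),
      (∀ d ∈ D, d ≠ 0 ∧ d.primeFactors ⊆ P ∧ ∀ p : ℕ, d.factorization p ≤ A) →
      ∑ d ∈ D, ∏ p ∈ P, g p (d.factorization p) ≤ ∏ p ∈ P, ∑ a ∈ Finset.range (A + 1), g p a := by
  induction P using Finset.induction_on with
  | empty =>
      intro D hD
      have hD1 : D ⊆ {1} := by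
        intro d hd
        obtain ⟨hd0, hsub, -⟩ := hD d hd
        have : d.primeFactors = ∅ := Finset.subset_empty.mp hsub
        rcases Nat.primeFactors_eq_empty.mp this with h | h
        · exact absurd h hd0
        · simp [h]
      simp only [Finset.prod_empty]
      calc ∑ _d ∈ D, (1:ℝ) = D.card := by simp
        _ ≤ ({1} : Finset ℕ).card := by exact_mod_cast Finset.card_le_card hD1
        _ = 1 := by simp
  | @insert q P hqP ih =>
      intro D hD
      set c := fun d : ℕ => ordCompl[q] d with hc
      have key1 : ∀ d ∈ D, (∏ p ∈ insert q P, g p (d.factorization p)) =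
          g q (d.factorization q) * ∏ p ∈ P, g p ((c d).factorization p) := by
        intro d hd
        rw [Finset.prod_insert hqP]
        congr 1
        refine Finset.prod_congr rfl fun p hp => ?_
        have hpq : p ≠ q := fun h => hqP (h ▸ hp)
        rw [hc]
        rw [Nat.factorization_ordCompl d q, Finsupp.erase_ne hpq]
      have hinj : Set.InjOn (fun d : ℕ => (d.factorization q, c d)) D := by
        intro d1 h1 d2 h2 heq
        have e1 : q ^ d1.factorization q * c d1 = d1 := Nat.ordProj_mul_ordCompl_eq_self d1 q
        have e2 : q ^ d2.factorization q * c d2 = d2 := Nat.ordProj_mul_ordCompl_eq_self d2 q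
        have hv : d1.factorization q = d2.factorization q := congrArg Prod.fst heq
        have hcc : c d1 = c d2 := congrArg Prod.snd heq
        rw [← e1, ← e2, hv, hcc]
      set D' := D.image c with hD'
      set E := D.image (fun d : ℕ => (d.factorization q, c d)) with hE
      have hstep : ∑ d ∈ D, ∏ p ∈ insert q P, g p (d.factorization p) =
          ∑ x ∈ E, g q x.1 * ∏ p ∈ P, g p (x.2.factorization p) := by
        rw [hE, Finset.sum_image hinj]
        exact Finset.sum_congr rfl key1
      have hEsub : E ⊆ Finset.range (A + 1) ×ˢ D' := by
        intro x hx
        rw [hE] at hx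
        obtain ⟨d, hd, rfl⟩ := Finset.mem_image.mp hx
        refine Finset.mem_product.mpr ⟨?_, ?_⟩
        · exact Finset.mem_range.mpr (Nat.lt_succ_of_le ((hD d hd).2.2 q))
        · exact Finset.mem_image_of_mem _ hd
      have hnn : ∀ x : ℕ × ℕ, 0 ≤ g q x.1 * ∏ p ∈ P, g p (x.2.factorization p) := by
        intro x
        exact mul_nonneg (hgnn q x.1) (Finset.prod_nonneg fun p _ => hgnn p _)
      have hmono : ∑ x ∈ E, g q x.1 * ∏ p ∈ P, g p (x.2.factorization p) ≤
          ∑ x ∈ Finset.range (A + 1) ×ˢ D', g q x.1 * ∏ p ∈ P, g p (x.2.factorization p) :=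
        Finset.sum_le_sum_of_subset_of_nonneg hEsub (fun x _ _ => hnn x)
      have hprod : ∑ x ∈ Finset.range (A + 1) ×ˢ D', g q x.1 * ∏ p ∈ P, g p (x.2.factorization p)
          = (∑ a ∈ Finset.range (A + 1), g q a) * ∑ e ∈ D', ∏ p ∈ P, g p (e.factorization p) := by
        rw [Finset.sum_mul_sum, Finset.sum_product]
      have hIH : ∑ e ∈ D', ∏ p ∈ P, g p (e.factorization p) ≤
          ∏ p ∈ P, ∑ a ∈ Finset.range (A + 1), g p a := by
        apply ih
        intro e he
        obtain ⟨d, hd, rfl⟩ := Finset.mem_image.mp he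
        obtain ⟨hd0, hsub, hA⟩ := hD d hd
        refine ⟨(Nat.ordCompl_pos q hd0).ne', ?_, ?_⟩
        · intro p hp
          have : p ∈ d.primeFactors.erase q := by
            rwa [← Nat.support_factorization, Nat.factorization_ordCompl d q,
              Finsupp.support_erase, Nat.support_factorization] at hp
          have hpq := Finset.ne_of_mem_erase this
          have := hsub (Finset.mem_of_mem_erase this)
          rcases Finset.mem_insert.mp this with h | h
          · exact absurd h hpq
          · exact h
        · intro p
          rw [Nat.factorization_ordCompl d q]
          rcases eq_or_ne p q with rfl | hpq
          · simp
          · rw [Finsupp.erase_ne hpq]; exact hA p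
      calc ∑ d ∈ D, ∏ p ∈ insert q P, g p (d.factorization p)
          ≤ (∑ a ∈ Finset.range (A + 1), g q a) * ∑ e ∈ D', ∏ p ∈ P, g p (e.factorization p) := by
            rw [hstep, ← hprod]; exact hmono
        _ ≤ (∑ a ∈ Finset.range (A + 1), g q a) * ∏ p ∈ P, ∑ a ∈ Finset.range (A + 1), g p a := by
            apply mul_le_mul_of_nonneg_left hIH
            exact Finset.sum_nonneg fun a _ => hgnn q a
        _ = ∏ p ∈ insert q P, ∑ a ∈ Finset.range (A + 1), g p a := by rw [Finset.prod_insert hqP]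

end SmoothAux

namespace SmoothAux

lemma theta_le (n : ℕ) :
    ∑ p ∈ (Finset.range n).filter Nat.Prime, Real.log p ≤ (n : ℝ) * Real.log 4 := by
  have hlog4 : 0 ≤ Real.log 4 := Real.log_nonneg (by norm_num)
  rcases Nat.eq_zero_or_pos n with rfl | hn
  · simp
  obtain ⟨m, rfl⟩ := Nat.exists_eq_add_of_le hn
  rw [add_comm]
  have hprod : ∑ p ∈ (Finset.range (m + 1)).filter Nat.Prime, Real.log p
      = Real.log (primorial m) := by
    rw [primorial]
    push_cast
    rw [Real.log_prod]
    intro p hp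
    have := (Finset.mem_filter.mp hp).2.pos
    positivity
  rw [hprod]
  have h1 : (primorial m : ℝ) ≤ ((4 : ℕ) : ℝ) ^ m := by
    exact_mod_cast primorial_le_4_pow m
  have h2 : Real.log (primorial m) ≤ Real.log (((4 : ℕ) : ℝ) ^ m) := by
    apply Real.log_le_log (by exact_mod_cast primorial_pos m) h1
  calc Real.log (primorial m) ≤ Real.log (((4 : ℕ) : ℝ) ^ m) := h2
    _ = m * Real.log 4 := by rw [Real.log_pow]; norm_num
    _ ≤ (m + 1 : ℕ) * Real.log 4 := by
        apply mul_le_mul_of_nonneg_right _ hlog4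
        push_cast; linarith

lemma mertens_le (z : ℝ) (hz : 2 ≤ z) :
    ∑ p ∈ (Finset.range (⌊z⌋₊ + 1)).filter Nat.Prime, Real.log p / p
      ≤ 4 * Real.log z + 3 := by
  set K := ⌊z⌋₊ with hK
  have hK2 : 2 ≤ K := Nat.le_floor (by exact_mod_cast hz)
  set J := Nat.log 2 K with hJ
  set Q : ℕ → Finset ℕ := fun j =>
    ((Finset.range (K + 1)).filter Nat.Prime).filter (fun p => 2 ^ j ≤ p ∧ p < 2 ^ (j + 1))
    with hQ
  have hcover : (Finset.range (K + 1)).filter Nat.Prime ⊆ (Finset.range (J + 1)).biUnion Q := by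
    intro p hp
    have hpp := (Finset.mem_filter.mp hp).2
    have hpK : p < K + 1 := Finset.mem_range.mp (Finset.mem_filter.mp hp).1
    refine Finset.mem_biUnion.mpr ⟨Nat.log 2 p, ?_, ?_⟩
    · exact Finset.mem_range.mpr (Nat.lt_succ_of_le (Nat.log_mono_right (Nat.lt_succ_iff.mp hpK)))
    · exact Finset.mem_filter.mpr ⟨hp,
        Nat.pow_log_le_self 2 hpp.pos.ne', Nat.lt_pow_succ_log_self (by norm_num) p⟩
  have hdisj0 : ∀ j1 j2 : ℕ, j1 < j2 → Disjoint (Q j1) (Q j2) := by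
    intro j1 j2 hlt
    refine Finset.disjoint_left.mpr fun p hp1 hp2 => ?_
    have h1 : p < 2 ^ (j1 + 1) := (Finset.mem_filter.mp hp1).2.2
    have h2 : 2 ^ j2 ≤ p := (Finset.mem_filter.mp hp2).2.1
    have : (2:ℕ) ^ (j1 + 1) ≤ 2 ^ j2 := Nat.pow_le_pow_right (by norm_num) (by omega)
    omega
  have hdisj : ∀ j1 ∈ Finset.range (J + 1), ∀ j2 ∈ Finset.range (J + 1), j1 ≠ j2 →
      Disjoint (Q j1) (Q j2) := by
    intro j1 _ j2 _ hne
    rcases Nat.lt_or_ge j1 j2 with h | h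
    · exact hdisj0 j1 j2 h
    · exact (hdisj0 j2 j1 (by omega)).symm
  have hnn : ∀ p : ℕ, p.Prime → (0:ℝ) ≤ Real.log p / p := by
    intro p hp
    apply div_nonneg (Real.log_nonneg (by exact_mod_cast hp.one_lt.le)) (by positivity)
  have hsum1 : ∑ p ∈ (Finset.range (K + 1)).filter Nat.Prime, Real.log p / p
      ≤ ∑ j ∈ Finset.range (J + 1), ∑ p ∈ Q j, Real.log p / p := by
    rw [← Finset.sum_biUnion hdisj]
    apply Finset.sum_le_sum_of_subset_of_nonneg hcover
    intro p hp _
    obtain ⟨j, -, hpQ⟩ := Finset.mem_biUnion.mp hp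
    exact hnn p (Finset.mem_filter.mp (Finset.mem_filter.mp hpQ).1).2
  have hinner : ∀ j : ℕ, ∑ p ∈ Q j, Real.log p / p ≤ 2 * Real.log 4 := by
    intro j
    have step1 : ∑ p ∈ Q j, Real.log p / p ≤ ∑ p ∈ Q j, Real.log p / 2 ^ j := by
      apply Finset.sum_le_sum
      intro p hp
      have hpp := (Finset.mem_filter.mp (Finset.mem_filter.mp hp).1).2
      have hlb : (2:ℝ) ^ j ≤ (p : ℝ) := by exact_mod_cast (Finset.mem_filter.mp hp).2.1
      exact div_le_div_of_nonneg_left (Real.log_nonneg (by exact_mod_cast hpp.one_lt.le))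
        (by positivity) hlb
    have step2 : ∑ p ∈ Q j, Real.log p / 2 ^ j ≤ (2 ^ (j+1) : ℝ) * Real.log 4 / 2 ^ j := by
      rw [← Finset.sum_div]
      apply div_le_div_of_nonneg_right _ (by positivity)
      calc ∑ p ∈ Q j, Real.log p
          ≤ ∑ p ∈ (Finset.range (2 ^ (j+1))).filter Nat.Prime, Real.log p := by
            apply Finset.sum_le_sum_of_subset_of_nonneg
            · intro p hp
              refine Finset.mem_filter.mpr ⟨Finset.mem_range.mpr (Finset.mem_filter.mp hp).2.2,
                (Finset.mem_filter.mp (Finset.mem_filter.mp hp).1).2⟩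
            · intro p hp _
              exact Real.log_nonneg
                (by exact_mod_cast (Finset.mem_filter.mp hp).2.one_lt.le)
        _ ≤ (2 ^ (j+1) : ℝ) * Real.log 4 := by exact_mod_cast theta_le (2 ^ (j+1))
    calc ∑ p ∈ Q j, Real.log p / p ≤ (2 ^ (j+1) : ℝ) * Real.log 4 / 2 ^ j :=
          step1.trans step2
      _ = 2 * Real.log 4 := by
          rw [pow_succ]; field_simp
  have hJbound : (J : ℝ) * Real.log 2 ≤ Real.log z := by
    have h2J : (2:ℝ) ^ J ≤ z := by
      calc (2:ℝ) ^ J ≤ (K : ℝ) := by exact_mod_cast Nat.pow_log_le_self 2 (by omega)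
        _ ≤ z := Nat.floor_le (by linarith)
    calc (J : ℝ) * Real.log 2 = Real.log ((2:ℝ) ^ J) := by rw [Real.log_pow]
      _ ≤ Real.log z := Real.log_le_log (by positivity) h2J
  have hlog2pos : (0:ℝ) < Real.log 2 := Real.log_pos (by norm_num)
  have hlog4 : Real.log 4 = 2 * Real.log 2 := by
    rw [show (4:ℝ) = 2 ^ 2 by norm_num, Real.log_pow]; push_cast; ring
  calc ∑ p ∈ (Finset.range (K + 1)).filter Nat.Prime, Real.log p / p
      ≤ ∑ j ∈ Finset.range (J + 1), ∑ p ∈ Q j, Real.log p / p := hsum1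
    _ ≤ ∑ _j ∈ Finset.range (J + 1), 2 * Real.log 4 :=
        Finset.sum_le_sum fun j _ => hinner j
    _ = (J + 1 : ℝ) * (2 * Real.log 4) := by
        rw [Finset.sum_const, Finset.card_range, nsmul_eq_mul]; push_cast; ring
    _ ≤ 4 * Real.log z + 3 := by
        rw [hlog4]
        have hlog2lt : Real.log 2 < 0.6931471808 := Real.log_two_lt_d9
        nlinarith [hJbound, hlog2pos]

end SmoothAux


namespace SmoothAux

lemma smoothPart_pos (z : ℝ) (n : ℕ) : 0 < smoothPart z n := by
  apply Finset.prod_pos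
  intro p hp
  exact pow_pos (Nat.prime_of_mem_primeFactors (Finset.mem_filter.mp hp).1).pos _

lemma prod_primeFactors_pow_eq {n : ℕ} (hn : n ≠ 0) :
    ∏ p ∈ n.primeFactors, p ^ n.factorization p = n := by
  conv_rhs => rw [← Nat.factorization_prod_pow_eq_self hn]
  rfl

lemma smoothPart_dvd (z : ℝ) {n : ℕ} (hn : n ≠ 0) : smoothPart z n ∣ n := by
  have h := prod_primeFactors_pow_eq hn
  calc smoothPart z n ∣ ∏ p ∈ n.primeFactors, p ^ n.factorization p :=
        Finset.prod_dvd_prod_of_subset _ _ _ (Finset.filter_subset _ _)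
    _ = n := h

lemma prime_dvd_smoothPart_le {z : ℝ} {n q : ℕ} (hq : q.Prime)
    (hdvd : q ∣ smoothPart z n) : (q : ℝ) ≤ z := by
  obtain ⟨p, hp, hqp⟩ := hq.prime.exists_mem_finset_dvd hdvd
  have hple := (Finset.mem_filter.mp hp).2
  have hpp := Nat.prime_of_mem_primeFactors (Finset.mem_filter.mp hp).1
  have : q = p := (Nat.prime_dvd_prime_iff_eq hq hpp).mp (hq.dvd_of_dvd_pow hqp)
  exact this ▸ hple

noncomputable def gf (s : ℝ) (p : ℕ) (a : ℕ) : ℝ :=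
  if a = 0 then 1 else ((p : ℝ) ^ (s * (a : ℝ)) - (p : ℝ) ^ (s * ((a : ℝ) - 1))) / (p : ℝ) ^ a

lemma gf_zero (s : ℝ) (p : ℕ) : gf s p 0 = 1 := rfl

lemma gf_nonneg {s : ℝ} (hs : 0 ≤ s) (p a : ℕ) : 0 ≤ gf s p a := by
  unfold gf
  rcases eq_or_ne a 0 with rfl | ha
  · norm_num
  rw [if_neg ha]
  rcases Nat.eq_zero_or_pos p with rfl | hp
  · rw [show ((0:ℕ):ℝ) = 0 by norm_num, zero_pow ha, div_zero]
  have h1p : (1 : ℝ) ≤ (p : ℝ) := by exact_mod_cast hp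
  have hle : s * ((a : ℝ) - 1) ≤ s * (a : ℝ) := by nlinarith
  have := Real.rpow_le_rpow_of_exponent_le h1p hle
  apply div_nonneg (by linarith) (by positivity)

lemma exp_half_le : Real.exp (1/2) ≤ 1.7 := by
  have h := Real.exp_one_lt_d9
  have hsq : Real.exp (1/2) * Real.exp (1/2) = Real.exp 1 := by
    rw [← Real.exp_add]; norm_num
  nlinarith [Real.exp_pos (1/2 : ℝ)]

lemma gf_sum_le {z s : ℝ} (hz : 2 ≤ z) (hs : s = 1 / (2 * Real.log z)) {p : ℕ}
    (hp : p.Prime) (hple : (p : ℝ) ≤ z) (X : ℕ) :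
    ∑ a ∈ Finset.range (X + 1), gf s p a ≤ 1 + 12 * s * (Real.log p / p) := by
  have hlogz : 0 < Real.log z := Real.log_pos (by linarith)
  have hs0 : 0 < s := by rw [hs]; positivity
  have hp2 : (2 : ℝ) ≤ (p : ℝ) := by exact_mod_cast hp.two_le
  have hlogp : 0 ≤ Real.log p := Real.log_nonneg (by linarith)
  set t := (p : ℝ) ^ s with ht
  have htexp : t = Real.exp (s * Real.log p) := by
    rw [ht, Real.rpow_def_of_pos (by linarith)]; ring_nf
  have hslogp : s * Real.log p ≤ 1 / 2 := by
    have hlplz : Real.log p ≤ Real.log z := Real.log_le_log (by linarith) hple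
    have h1 : s * Real.log p ≤ s * Real.log z := by
      apply mul_le_mul_of_nonneg_left hlplz
      rw [hs]; positivity
    have heq : s * Real.log z = 1 / 2 := by
      rw [hs]; field_simp
    linarith
  have ht17 : t ≤ 1.7 := by
    rw [htexp]
    calc Real.exp (s * Real.log p) ≤ Real.exp (1/2) := Real.exp_le_exp.mpr hslogp
      _ ≤ 1.7 := exp_half_le
  have ht1 : 1 ≤ t := by
    rw [htexp]
    calc (1:ℝ) = Real.exp 0 := Real.exp_zero.symm
      _ ≤ _ := Real.exp_le_exp.mpr (by positivity)
  -- each term for a+1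
  have hterm : ∀ a : ℕ, gf s p (a + 1) = (t - 1) / p * (t / p) ^ a := by
    intro a
    unfold gf
    rw [if_neg (Nat.succ_ne_zero a)]
    have e1 : (p : ℝ) ^ (s * ((a + 1 : ℕ) : ℝ)) = t ^ (a + 1) := by
      rw [ht, ← Real.rpow_natCast ((p:ℝ) ^ s) (a+1), ← Real.rpow_mul (by positivity)]
    have e2 : (p : ℝ) ^ (s * (((a + 1 : ℕ) : ℝ) - 1)) = t ^ a := by
      rw [ht, ← Real.rpow_natCast ((p:ℝ) ^ s) a, ← Real.rpow_mul (by positivity)]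
      push_cast; ring_nf
    rw [e1, e2]
    have hpa : ((p : ℝ) ^ (a + 1 : ℕ)) = (p:ℝ) * (p:ℝ) ^ a := by ring
    rw [hpa]
    field_simp
    have hp0 : (p:ℝ) ^ a * ((p:ℝ)⁻¹) ^ a = 1 := by
      rw [← mul_pow, mul_inv_cancel₀ (ne_of_gt (by linarith)), one_pow]
    linear_combination (t ^ a - t * t ^ a) * hp0
  have hr : t / p ≤ 0.85 := by
    rw [div_le_iff₀ (by linarith)]
    nlinarith
  have hr0 : 0 ≤ t / p := by positivity
  have hgeom : ∑ a ∈ Finset.range X, (t / p) ^ a ≤ (1 : ℝ) / 0.15 := by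
    have hne : t / p ≠ 1 := by norm_num at hr ⊢; linarith
    rw [geom_sum_eq hne]
    have h1 : (0:ℝ) < 1 - t / p := by linarith
    have hpow : 0 ≤ (t / p) ^ X := by positivity
    have heq : ((t / ↑p) ^ X - 1) / (t / ↑p - 1) = (1 - (t / ↑p) ^ X) / (1 - t / ↑p) := by
      rw [← neg_div_neg_eq]; ring_nf
    rw [heq, div_le_div_iff₀ h1 (by norm_num)]
    nlinarith
  have htm1 : t - 1 ≤ 1.7 * (s * Real.log p) := by
    have hx := Real.add_one_le_exp (-(s * Real.log p))
    have hepos := Real.exp_pos (s * Real.log p)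
    have : Real.exp (-(s * Real.log p)) * Real.exp (s * Real.log p) = 1 := by
      rw [← Real.exp_add]; norm_num
    nlinarith [htexp, ht17, mul_nonneg hs0.le hlogp]
  calc ∑ a ∈ Finset.range (X + 1), gf s p a
      = (∑ a ∈ Finset.range X, gf s p (a + 1)) + gf s p 0 := Finset.sum_range_succ' _ _
    _ = (t - 1) / p * ∑ a ∈ Finset.range X, (t / p) ^ a + 1 := by
        rw [gf_zero]
        congr 1
        rw [Finset.mul_sum]
        exact Finset.sum_congr rfl fun a _ => hterm a
    _ ≤ (t - 1) / p * (1 / 0.15) + 1 := by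
        have h1 : 0 ≤ (t - 1) / p := by
          apply div_nonneg (by linarith) (by linarith)
        nlinarith [hgeom]
    _ = 1 + ((t - 1) * (1 / 0.15)) / p := by ring
    _ ≤ 1 + (12 * s * Real.log p) / p := by
        have hnum : (t - 1) * (1 / 0.15) ≤ 12 * s * Real.log p := by
          nlinarith [htm1, mul_nonneg hs0.le hlogp]
        have hd : ((t - 1) * (1 / 0.15)) / p ≤ (12 * s * Real.log p) / p := by
          gcongr
        linarith
    _ = 1 + 12 * s * (Real.log p / p) := by ring

end SmoothAux

namespace SmoothAux

lemma key (z : ℝ) (hz : 2 ≤ z) (X : ℕ) :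
    ∑ n ∈ Finset.Icc 1 X, ((smoothPart z n : ℕ) : ℝ) ^ (1 / (2 * Real.log z))
      ≤ Real.exp 50 * X := by
  have hlogz : 0 < Real.log z := Real.log_pos (by linarith)
  set s := 1 / (2 * Real.log z) with hs
  have hs0 : 0 < s := by rw [hs]; positivity
  set D := (Finset.Icc 1 X).filter (fun d : ℕ => ∀ p ∈ d.primeFactors, (p : ℝ) ≤ z) with hD
  set P := (Finset.range (⌊z⌋₊ + 1)).filter Nat.Prime with hP
  have hPmem : ∀ p ∈ P, p.Prime ∧ (p : ℝ) ≤ z := by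
    intro p hp
    have h1 := (Finset.mem_filter.mp hp).2
    have h2 : p ≤ ⌊z⌋₊ := Nat.lt_succ_iff.mp (Finset.mem_range.mp (Finset.mem_filter.mp hp).1)
    refine ⟨h1, ?_⟩
    calc (p : ℝ) ≤ (⌊z⌋₊ : ℝ) := by exact_mod_cast h2
      _ ≤ z := Nat.floor_le (by linarith)
  have hPF : ∀ d ∈ D, d.primeFactors ⊆ P := by
    intro d hd p hp
    have hsm := (Finset.mem_filter.mp hd).2 p hp
    have hpp := Nat.prime_of_mem_primeFactors hp
    refine Finset.mem_filter.mpr ⟨Finset.mem_range.mpr (Nat.lt_succ_of_le ?_), hpp⟩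
    exact Nat.le_floor hsm
  -- Step 1: pointwise, (smoothPart z n)^s ≤ ∑_{d ∈ D} [d ∣ n] * Hf s d
  have hper : ∀ n ∈ Finset.Icc 1 X,
      ((smoothPart z n : ℕ) : ℝ) ^ s ≤ ∑ d ∈ D, (if d ∣ n then Hf s d else 0) := by
    intro n hn
    have hn1 : 1 ≤ n := (Finset.mem_Icc.mp hn).1
    have hnX : n ≤ X := (Finset.mem_Icc.mp hn).2
    have hn0 : n ≠ 0 := by omega
    have hsp0 : smoothPart z n ≠ 0 := (smoothPart_pos z n).ne'
    rw [← sum_divisors_Hf hsp0]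
    have hsub : (smoothPart z n).divisors ⊆ D.filter (· ∣ n) := by
      intro d hd
      have hddvd : d ∣ smoothPart z n := (Nat.mem_divisors.mp hd).1
      have hd0 : 0 < d := Nat.pos_of_mem_divisors hd
      have hdn : d ∣ n := hddvd.trans (smoothPart_dvd z hn0)
      refine Finset.mem_filter.mpr ⟨Finset.mem_filter.mpr ⟨?_, ?_⟩, hdn⟩
      · exact Finset.mem_Icc.mpr ⟨hd0, (Nat.le_of_dvd (by omega) hdn).trans hnX⟩
      · intro p hp
        exact prime_dvd_smoothPart_le (Nat.prime_of_mem_primeFactors hp)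
          ((Nat.dvd_of_mem_primeFactors hp).trans hddvd)
    calc ∑ d ∈ (smoothPart z n).divisors, Hf s d
        ≤ ∑ d ∈ D.filter (· ∣ n), Hf s d :=
          Finset.sum_le_sum_of_subset_of_nonneg hsub (fun d _ _ => Hf_nonneg hs0.le d)
      _ = ∑ d ∈ D, (if d ∣ n then Hf s d else 0) := by rw [Finset.sum_filter]
  -- Step 2: swap and count multiples
  have hswap : ∑ n ∈ Finset.Icc 1 X, ∑ d ∈ D, (if d ∣ n then Hf s d else 0)
      ≤ (X : ℝ) * ∑ d ∈ D, Hf s d / d := by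
    rw [Finset.sum_comm, Finset.mul_sum]
    apply Finset.sum_le_sum
    intro d hd
    have hd1 : 1 ≤ d := (Finset.mem_Icc.mp (Finset.mem_filter.mp hd).1).1
    have hcard : ∑ n ∈ Finset.Icc 1 X, (if d ∣ n then Hf s d else 0)
        = ((X / d : ℕ) : ℝ) * Hf s d := by
      rw [← Finset.sum_filter, Finset.sum_const, nsmul_eq_mul]
      congr 1
      rw [show Finset.Icc 1 X = Finset.Ioc 0 X from (Finset.Icc_add_one_left_eq_Ioc 0 X)]
      exact_mod_cast congrArg (Nat.cast : ℕ → ℝ) (Nat.Ioc_filter_dvd_card_eq_div X d)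
    rw [hcard]
    have h1 : ((X / d : ℕ) : ℝ) ≤ (X : ℝ) / d := Nat.cast_div_le
    have h2 : 0 ≤ Hf s d := Hf_nonneg hs0.le d
    calc ((X / d : ℕ) : ℝ) * Hf s d ≤ (X : ℝ) / d * Hf s d :=
          mul_le_mul_of_nonneg_right h1 h2
      _ = (X : ℝ) * (Hf s d / d) := by ring
  -- Step 3: Hf s d / d factors through P
  have hfac : ∀ d ∈ D, Hf s d / d = ∏ p ∈ P, gf s p (d.factorization p) := by
    intro d hd
    have hd0 : d ≠ 0 := by
      have := (Finset.mem_Icc.mp (Finset.mem_filter.mp hd).1).1; omega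
    have hdcast : (d : ℝ) = ∏ p ∈ d.primeFactors, (p : ℝ) ^ (d.factorization p) := by
      conv_lhs => rw [← prod_primeFactors_pow_eq hd0]
      push_cast
      rfl
    have h1 : Hf s d / d = ∏ p ∈ d.primeFactors,
        ((p : ℝ) ^ (s * (d.factorization p : ℝ)) -
          (p : ℝ) ^ (s * ((d.factorization p : ℝ) - 1))) / (p : ℝ) ^ (d.factorization p) := by
      unfold Hf
      rw [hdcast, ← Finset.prod_div_distrib]
    rw [h1]
    have h2 : ∀ p ∈ d.primeFactors,
        ((p : ℝ) ^ (s * (d.factorization p : ℝ)) -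
          (p : ℝ) ^ (s * ((d.factorization p : ℝ) - 1))) / (p : ℝ) ^ (d.factorization p)
        = gf s p (d.factorization p) := by
      intro p hp
      have hv : d.factorization p ≠ 0 := by
        rw [← Nat.support_factorization] at hp
        exact Finsupp.mem_support_iff.mp hp
      rw [gf, if_neg hv]
    rw [Finset.prod_congr rfl h2]
    apply Finset.prod_subset (hPF d hd)
    intro p _ hnp
    have : d.factorization p = 0 := by
      rw [← Nat.support_factorization] at hnp
      exact Finsupp.notMem_support_iff.mp hnp
    rw [this, gf_zero]
  -- Step 4: apply prodBound
  have hPB : ∑ d ∈ D, ∏ p ∈ P, gf s p (d.factorization p)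
      ≤ ∏ p ∈ P, ∑ a ∈ Finset.range (X + 1), gf s p a := by
    apply prodBound (gf s) (gf_zero s) (gf_nonneg hs0.le) X P D
    intro d hd
    have hd1 : 1 ≤ d := (Finset.mem_Icc.mp (Finset.mem_filter.mp hd).1).1
    have hdX : d ≤ X := (Finset.mem_Icc.mp (Finset.mem_filter.mp hd).1).2
    refine ⟨by omega, hPF d hd, fun p => ?_⟩
    exact (Nat.factorization_lt p (by omega)).le.trans hdX
  -- Step 5: bound the product
  have hprod : ∏ p ∈ P, ∑ a ∈ Finset.range (X + 1), gf s p a ≤ Real.exp 50 := by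
    have step1 : ∏ p ∈ P, ∑ a ∈ Finset.range (X + 1), gf s p a
        ≤ ∏ p ∈ P, Real.exp (12 * s * (Real.log p / p)) := by
      apply Finset.prod_le_prod
      · intro p _
        exact Finset.sum_nonneg fun a _ => gf_nonneg hs0.le p a
      · intro p hp
        obtain ⟨hpp, hple⟩ := hPmem p hp
        have h1 := gf_sum_le hz hs hpp hple X
        have h2 := Real.add_one_le_exp (12 * s * (Real.log p / p))
        linarith
    have step2 : ∏ p ∈ P, Real.exp (12 * s * (Real.log p / p))
        = Real.exp (12 * s * ∑ p ∈ P, Real.log p / p) := by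
      rw [← Real.exp_sum, Finset.mul_sum]
    have step3 : 12 * s * ∑ p ∈ P, Real.log p / p ≤ 50 := by
      have hM := mertens_le z hz
      have hMnn : 12 * s * ∑ p ∈ P, Real.log p / p ≤ 12 * s * (4 * Real.log z + 3) := by
        apply mul_le_mul_of_nonneg_left hM (by positivity)
      have hslogz : s * Real.log z = 1 / 2 := by rw [hs]; field_simp
      have hlog2 : (0.6931471803 : ℝ) < Real.log 2 := Real.log_two_gt_d9
      have hlz2 : Real.log 2 ≤ Real.log z := Real.log_le_log (by norm_num) hz
      have hsle : s ≤ 1 / (2 * 0.6931471803) := by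
        rw [hs]
        apply div_le_div_of_nonneg_left (by norm_num) (by norm_num) (by nlinarith)
      nlinarith
    calc ∏ p ∈ P, ∑ a ∈ Finset.range (X + 1), gf s p a
        ≤ Real.exp (12 * s * ∑ p ∈ P, Real.log p / p) := by rw [← step2]; exact step1
      _ ≤ Real.exp 50 := Real.exp_le_exp.mpr step3
  -- combine
  calc ∑ n ∈ Finset.Icc 1 X, ((smoothPart z n : ℕ) : ℝ) ^ s
      ≤ ∑ n ∈ Finset.Icc 1 X, ∑ d ∈ D, (if d ∣ n then Hf s d else 0) :=
        Finset.sum_le_sum hper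
    _ ≤ (X : ℝ) * ∑ d ∈ D, Hf s d / d := hswap
    _ = (X : ℝ) * ∑ d ∈ D, ∏ p ∈ P, gf s p (d.factorization p) := by
        congr 1
        exact Finset.sum_congr rfl hfac
    _ ≤ (X : ℝ) * ∏ p ∈ P, ∑ a ∈ Finset.range (X + 1), gf s p a := by
        apply mul_le_mul_of_nonneg_left hPB (by positivity)
    _ ≤ (X : ℝ) * Real.exp 50 := by
        apply mul_le_mul_of_nonneg_left hprod (by positivity)
    _ = Real.exp 50 * X := by ring

end SmoothAux

open SmoothAux in
theorem stmt_4 :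
    ∃ C : ℝ, 0 < C ∧ ∀ (u x z : ℝ), 1 ≤ u → 1 < z → z ^ u ≤ x →
      (((Finset.Icc 1 ⌊x⌋₊).filter
          (fun n : ℕ => z ^ u < (smoothPart z n : ℝ))).card : ℝ)
        ≤ C * x * Real.exp (-u / 2) := by
  refine ⟨Real.exp 50, Real.exp_pos 50, ?_⟩
  intro u x z hu hz hzx
  have hz0 : (0:ℝ) < z := by linarith
  have hY : (0:ℝ) < z ^ u := Real.rpow_pos_of_pos hz0 u
  have hx0 : (0:ℝ) < x := lt_of_lt_of_le hY hzx
  by_cases hz2 : z < 2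
  · have hempty : (Finset.Icc 1 ⌊x⌋₊).filter
        (fun n : ℕ => z ^ u < (smoothPart z n : ℝ)) = ∅ := by
      apply Finset.filter_false_of_mem
      intro n _
      have h1 : smoothPart z n = 1 := by
        unfold smoothPart
        have he : n.primeFactors.filter (fun p : ℕ => (p : ℝ) ≤ z) = ∅ := by
          apply Finset.filter_false_of_mem
          intro p hp
          have : 2 ≤ p := (Nat.prime_of_mem_primeFactors hp).two_le
          push_neg
          calc z < 2 := hz2
            _ ≤ (p : ℝ) := by exact_mod_cast this
        rw [he, Finset.prod_empty]
      rw [h1]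
      push_cast
      have h2 : (1:ℝ) < z ^ u := by
        rw [Real.one_lt_rpow_iff hz0.le]
        exact Or.inl ⟨hz, by linarith⟩
      linarith
    rw [hempty]
    simp only [Finset.card_empty, Nat.cast_zero]
    positivity
  push_neg at hz2
  set X := ⌊x⌋₊ with hX
  have hlogz : 0 < Real.log z := Real.log_pos (by linarith)
  set s := 1 / (2 * Real.log z) with hs
  have hs0 : 0 < s := by rw [hs]; positivity
  set T := (Finset.Icc 1 X).filter (fun n : ℕ => z ^ u < (smoothPart z n : ℝ)) with hT
  have hYs : (z ^ u) ^ s = Real.exp (u / 2) := by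
    rw [Real.rpow_def_of_pos hY, Real.log_rpow hz0]
    congr 1
    rw [hs]
    field_simp
  have hcard : (T.card : ℝ) * Real.exp (u / 2) ≤ Real.exp 50 * X := by
    calc (T.card : ℝ) * Real.exp (u / 2) = ∑ _n ∈ T, Real.exp (u / 2) := by
          rw [Finset.sum_const, nsmul_eq_mul]
      _ ≤ ∑ n ∈ T, ((smoothPart z n : ℕ) : ℝ) ^ s := by
          apply Finset.sum_le_sum
          intro n hn
          have hlt : z ^ u < ((smoothPart z n : ℕ) : ℝ) := (Finset.mem_filter.mp hn).2
          calc Real.exp (u / 2) = (z ^ u) ^ s := hYs.symm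
            _ ≤ ((smoothPart z n : ℕ) : ℝ) ^ s := Real.rpow_le_rpow hY.le hlt.le hs0.le
      _ ≤ ∑ n ∈ Finset.Icc 1 X, ((smoothPart z n : ℕ) : ℝ) ^ s :=
          Finset.sum_le_sum_of_subset_of_nonneg (Finset.filter_subset _ _)
            (fun n _ _ => Real.rpow_nonneg (Nat.cast_nonneg _) s)
      _ ≤ Real.exp 50 * X := key z hz2 X
  have hXx : (X : ℝ) ≤ x := Nat.floor_le hx0.le
  have hE : (0:ℝ) < Real.exp (u / 2) := Real.exp_pos _
  have h2 : (T.card : ℝ) ≤ Real.exp 50 * X * Real.exp (-u / 2) := by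
    have hrw : Real.exp (-u / 2) = (Real.exp (u / 2))⁻¹ := by
      rw [← Real.exp_neg]; ring_nf
    rw [hrw, ← div_eq_mul_inv, le_div_iff₀ hE]
    exact hcard
  calc (T.card : ℝ) ≤ Real.exp 50 * X * Real.exp (-u / 2) := h2
    _ ≤ Real.exp 50 * x * Real.exp (-u / 2) := by
        apply mul_le_mul_of_nonneg_right _ (Real.exp_pos _).le
        apply mul_le_mul_of_nonneg_left hXx (Real.exp_pos _).le
end

section
/- For u ≥ 1 and z > 1 with x ≥ z^u, one has Σ_{z^u < a < x, P⁺(a) ≤ z} 1/a ≪ (log z)·e^{−u/2}, with an absolute implied constant. -/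
set_option maxHeartbeats 1000000

open Finset Real

noncomputable def wm (n : ℕ) : ℝ := if n.Prime then Real.log n / n else 0

noncomputable def Tm (m : ℕ) : ℝ := ∑ n ∈ Finset.range (m + 1), wm n

lemma wm_nonneg (n : ℕ) : 0 ≤ wm n := by
  unfold wm
  split_ifs with h
  · have : (1:ℝ) ≤ n := by exact_mod_cast h.one_lt.le
    positivity
  · exact le_refl 0

lemma Tm_nonneg (m : ℕ) : 0 ≤ Tm m := Finset.sum_nonneg fun n _ => wm_nonneg n

lemma Tm_eq (m : ℕ) : Tm m = ∑ p ∈ (m + 1).primesBelow, Real.log p / p := by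
  rw [Tm, Nat.primesBelow, Finset.sum_filter]
  rfl

lemma log_primorial_le (M : ℕ) :
    ∑ p ∈ (M + 1).primesBelow, Real.log p ≤ M * Real.log 4 := by
  have h1 : ∑ p ∈ (M + 1).primesBelow, Real.log p = Real.log (primorial M) := by
    rw [primorial, Nat.primesBelow]
    rw [Nat.cast_prod, Real.log_prod]
    intro p hp
    have hp' : p.Prime := (Finset.mem_filter.mp hp).2
    exact_mod_cast hp'.pos.ne'
  rw [h1]
  have h2 : (primorial M : ℝ) ≤ (4:ℝ) ^ M := by exact_mod_cast primorial_le_4_pow M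
  calc Real.log (primorial M) ≤ Real.log ((4:ℝ) ^ M) := by
        apply Real.log_le_log (by exact_mod_cast (primorial_pos M)) h2
    _ = M * Real.log 4 := by rw [Real.log_pow]

lemma mertens1 (M : ℕ) (hM : 1 ≤ M) : Tm M ≤ Real.log M + Real.log 4 := by
  have hM0 : (0:ℝ) < M := by exact_mod_cast hM
  have hfac0 : M.factorial ≠ 0 := Nat.factorial_ne_zero M
  have hsub : (M + 1).primesBelow ⊆ M.factorial.primeFactors := by
    intro p hp
    have hp' := Nat.prime_of_mem_primesBelow hp
    have hpM : p ≤ M := Nat.lt_succ_iff.mp (Nat.lt_of_mem_primesBelow hp)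
    exact Nat.mem_primeFactors.mpr ⟨hp', Nat.dvd_factorial hp'.pos hpM, hfac0⟩
  have hstep : ∀ p ∈ (M + 1).primesBelow, (M / p : ℕ) ≤ M.factorial.factorization p := by
    intro p hp
    have hp' := Nat.prime_of_mem_primesBelow hp
    have hpM : p ≤ M := Nat.lt_succ_iff.mp (Nat.lt_of_mem_primesBelow hp)
    rw [← Nat.Prime.pow_dvd_iff_le_factorization hp' hfac0,
      Nat.Prime.pow_dvd_factorial_iff hp' (Nat.lt_succ_self _)]
    have h1 : 1 ∈ Finset.Ico 1 (Nat.log p M + 1) := by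
      have h0 : 0 < Nat.log p M := Nat.log_pos hp'.one_lt hpM
      simp only [Finset.mem_Ico]
      omega
    calc M / p = M / p ^ 1 := by rw [pow_one]
      _ ≤ ∑ i ∈ Finset.Ico 1 (Nat.log p M + 1), M / p ^ i :=
          Finset.single_le_sum (f := fun i => M / p ^ i) (fun i _ => Nat.zero_le _) h1
  -- log M! bound
  have hlogfac : Real.log M.factorial ≤ M * Real.log M := by
    have h2 : (M.factorial : ℝ) ≤ (M:ℝ) ^ M := by exact_mod_cast Nat.factorial_le_pow M
    calc Real.log M.factorial ≤ Real.log ((M:ℝ) ^ M) :=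
          Real.log_le_log (by exact_mod_cast Nat.factorial_pos M) h2
      _ = M * Real.log M := by rw [Real.log_pow]
  have hlow : ∑ p ∈ (M + 1).primesBelow, ((M / p : ℕ) : ℝ) * Real.log p
      ≤ Real.log M.factorial := by
    have hfaceq : Real.log M.factorial
        = ∑ p ∈ M.factorial.primeFactors, (M.factorial.factorization p : ℝ) * Real.log p := by
      conv_lhs => rw [← Nat.factorization_prod_pow_eq_self hfac0]
      rw [Nat.prod_factorization_eq_prod_primeFactors]
      push_cast
      rw [Real.log_prod]
      · exact Finset.sum_congr rfl fun p hp => by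
          rw [Real.log_pow]
      · intro p hp
        have hp' := Nat.prime_of_mem_primeFactors hp
        have : (0:ℝ) < (p:ℝ) ^ M.factorial.factorization p := by
          have : (0:ℝ) < (p:ℝ) := by exact_mod_cast hp'.pos
          positivity
        exact this.ne'
    rw [hfaceq]
    calc ∑ p ∈ (M + 1).primesBelow, ((M / p : ℕ) : ℝ) * Real.log p
        ≤ ∑ p ∈ (M + 1).primesBelow, (M.factorial.factorization p : ℝ) * Real.log p := by
          apply Finset.sum_le_sum
          intro p hp
          have hp' := Nat.prime_of_mem_primesBelow hp
          have hlogp : (0:ℝ) ≤ Real.log p := Real.log_nonneg (by exact_mod_cast hp'.one_lt.le)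
          have := hstep p hp
          exact mul_le_mul_of_nonneg_right (by exact_mod_cast this) hlogp
      _ ≤ ∑ p ∈ M.factorial.primeFactors, (M.factorial.factorization p : ℝ) * Real.log p := by
          apply Finset.sum_le_sum_of_subset_of_nonneg hsub
          intro p hp _
          have hp' := Nat.prime_of_mem_primeFactors hp
          have hlogp : (0:ℝ) ≤ Real.log p := Real.log_nonneg (by exact_mod_cast hp'.one_lt.le)
          positivity
  -- combine: for each prime p ≤ M, (M/p:ℕ) ≥ M/p - 1 in ℝ
  have hcast : ∀ p ∈ (M + 1).primesBelow, (M:ℝ)/p * Real.log p - Real.log p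
      ≤ ((M / p : ℕ) : ℝ) * Real.log p := by
    intro p hp
    have hp' := Nat.prime_of_mem_primesBelow hp
    have hp0 : (0:ℝ) < p := by exact_mod_cast hp'.pos
    have hlogp : (0:ℝ) ≤ Real.log p := Real.log_nonneg (by exact_mod_cast hp'.one_lt.le)
    have hdm := Nat.div_add_mod M p
    have hmod : (M % p : ℕ) < p := Nat.mod_lt _ hp'.pos
    have hq : (M:ℝ)/p - 1 ≤ ((M / p : ℕ) : ℝ) := by
      have h1 : (M:ℝ) = p * ((M / p : ℕ) : ℝ) + ((M % p : ℕ) : ℝ) := by exact_mod_cast hdm.symm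
      have h2 : ((M % p : ℕ) : ℝ) < p := by exact_mod_cast hmod
      rw [div_sub_one hp0.ne', div_le_iff₀ hp0]
      nlinarith
    nlinarith
  -- sum it all up
  have hsum : Tm M * M ≤ M * Real.log M + M * Real.log 4 := by
    have h1 : ∑ p ∈ (M + 1).primesBelow, ((M:ℝ)/p * Real.log p - Real.log p)
        ≤ M * Real.log M := le_trans (Finset.sum_le_sum hcast) (hlow.trans hlogfac)
    rw [Finset.sum_sub_distrib] at h1
    have h2 := log_primorial_le M
    have h3 : Tm M * M = ∑ p ∈ (M + 1).primesBelow, (M:ℝ)/p * Real.log p := by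
      rw [Tm_eq, Finset.sum_mul]
      apply Finset.sum_congr rfl
      intro p hp
      have hp' := Nat.prime_of_mem_primesBelow hp
      have hp0 : (0:ℝ) < p := by exact_mod_cast hp'.pos
      field_simp
    linarith
  nlinarith [hsum]

lemma log_ratio_aux {x : ℝ} (hx : 0 ≤ x) : x / (1 + x) ≤ Real.log (1 + x) := by
  have h1 : (0:ℝ) < 1 + x := by linarith
  have h2 := Real.log_le_sub_one_of_pos (x := (1 + x)⁻¹) (by positivity)
  rw [Real.log_inv] at h2
  have : x / (1 + x) = 1 - (1 + x)⁻¹ := by field_simp; ring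
  linarith

lemma loglog_step {n : ℕ} (hn : 2 ≤ n) :
    (Real.log (n + 1) - Real.log n) / Real.log (n + 1)
      ≤ Real.log (Real.log (n + 1)) - Real.log (Real.log n) := by
  have hn0 : (2:ℝ) ≤ (n:ℝ) := by exact_mod_cast hn
  have hL : 0 < Real.log n := Real.log_pos (by linarith)
  have hL1 : 0 < Real.log (n + 1) := Real.log_pos (by linarith)
  have hmono : Real.log n ≤ Real.log (n + 1) := Real.log_le_log (by linarith) (by linarith)
  set δ := Real.log (n + 1) - Real.log n with hδ
  have hδ0 : 0 ≤ δ := by linarith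
  have key := log_ratio_aux (x := δ / Real.log n) (by positivity)
  have h1 : 1 + δ / Real.log n = Real.log (n + 1) / Real.log n := by
    rw [hδ]; field_simp; ring
  have h2 : Real.log (Real.log (n + 1)) - Real.log (Real.log n)
      = Real.log (Real.log (n + 1) / Real.log n) := (Real.log_div hL1.ne' hL.ne').symm
  rw [h1] at key
  rw [h2]
  have h3 : (δ / Real.log n) / (Real.log (n + 1) / Real.log n) = δ / Real.log (n + 1) := by
    field_simp
  rw [h3] at key
  exact key

lemma abel_bound : ∀ M : ℕ, 2 ≤ M →
    ∑ n ∈ Finset.Icc 2 M, wm n / Real.log n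
      ≤ Tm M / Real.log M + Real.log (Real.log M)
        + Real.log 4 * (1 / Real.log 2 - 1 / Real.log M) + 1 := by
  intro M hM
  induction M, hM using Nat.le_induction with
  | base =>
    have h22 : Finset.Icc 2 2 = {2} := by rfl
    rw [h22, Finset.sum_singleton]
    have hT2 : Tm 2 = wm 2 := by
      rw [Tm]
      rw [show (2:ℕ) + 1 = 3 by rfl]
      rw [Finset.sum_range_succ, Finset.sum_range_succ, Finset.sum_range_one]
      have h0 : wm 0 = 0 := by simp [wm]
      have h1 : wm 1 = 0 := by simp [wm]
      rw [h0, h1]; ring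
    have hlog2 : (1:ℝ)/2 < Real.log 2 := by
      have := Real.log_two_gt_d9; linarith
    have hll2 : Real.log (1/2) ≤ Real.log (Real.log 2) :=
      Real.log_le_log (by norm_num) hlog2.le
    have hl2lt : Real.log 2 < 1 := by
      have := Real.log_two_lt_d9; linarith
    have : -1 ≤ Real.log (Real.log 2) := by
      rw [show (1:ℝ)/2 = 2⁻¹ by norm_num, Real.log_inv] at hll2
      linarith
    push_cast
    rw [hT2]
    linarith
  | succ M hM ih =>
    have hM2 : (2:ℝ) ≤ (M:ℝ) := by exact_mod_cast hM
    have hL : 0 < Real.log M := Real.log_pos (by linarith)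
    have hL1 : 0 < Real.log ((M:ℝ) + 1) := Real.log_pos (by linarith)
    have hmono : Real.log M ≤ Real.log ((M:ℝ) + 1) := Real.log_le_log (by linarith) (by linarith)
    have hsum : ∑ n ∈ Finset.Icc 2 (M + 1), wm n / Real.log n
        = (∑ n ∈ Finset.Icc 2 M, wm n / Real.log n) + wm (M + 1) / Real.log ((M:ℝ) + 1) := by
      rw [Finset.sum_Icc_succ_top (by omega : 2 ≤ M + 1)]
      push_cast
      ring
    have hT : Tm (M + 1) = Tm M + wm (M + 1) := Finset.sum_range_succ wm (M + 1)
    have hm1 := mertens1 M (by omega)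
    have hw : 0 ≤ wm (M + 1) := wm_nonneg _
    have hTnn := Tm_nonneg M
    -- key inequality
    have hx : 0 ≤ 1 / Real.log M - 1 / Real.log ((M:ℝ) + 1) := by
      have := one_div_le_one_div_of_le hL hmono
      linarith
    have hkey : Tm M / Real.log M - Tm M / Real.log ((M:ℝ) + 1)
        ≤ (Real.log (Real.log ((M:ℝ) + 1)) - Real.log (Real.log M))
          + Real.log 4 * (1 / Real.log M - 1 / Real.log ((M:ℝ) + 1)) := by
      have e1 : Tm M / Real.log M - Tm M / Real.log ((M:ℝ) + 1)
          = Tm M * (1 / Real.log M - 1 / Real.log ((M:ℝ) + 1)) := by ring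
      have e2 : Tm M * (1 / Real.log M - 1 / Real.log ((M:ℝ) + 1))
          ≤ (Real.log M + Real.log 4) * (1 / Real.log M - 1 / Real.log ((M:ℝ) + 1)) :=
        mul_le_mul_of_nonneg_right hm1 hx
      have e3 : Real.log M * (1 / Real.log M - 1 / Real.log ((M:ℝ) + 1))
          = (Real.log ((M:ℝ) + 1) - Real.log M) / Real.log ((M:ℝ) + 1) := by
        field_simp
      have e4 := loglog_step hM
      push_cast at e4
      rw [e1]
      calc Tm M * (1 / Real.log M - 1 / Real.log ((M:ℝ) + 1))
          ≤ (Real.log M + Real.log 4) * (1 / Real.log M - 1 / Real.log ((M:ℝ) + 1)) := e2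
        _ = Real.log M * (1 / Real.log M - 1 / Real.log ((M:ℝ) + 1))
            + Real.log 4 * (1 / Real.log M - 1 / Real.log ((M:ℝ) + 1)) := by ring
        _ ≤ _ := by rw [e3]; linarith
    rw [hsum, hT]
    push_cast
    have expand : (Tm M + wm (M + 1)) / Real.log ((M:ℝ) + 1)
        = Tm M / Real.log ((M:ℝ) + 1) + wm (M + 1) / Real.log ((M:ℝ) + 1) := by ring
    rw [expand]
    push_cast at ih
    linarith

lemma log_four : Real.log 4 = 2 * Real.log 2 := by
  rw [show (4:ℝ) = 2 ^ 2 by norm_num, Real.log_pow]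
  push_cast; ring

lemma mertens2 (M : ℕ) (hM : 2 ≤ M) :
    ∑ p ∈ (M + 1).primesBelow, 1 / (p:ℝ) ≤ Real.log (Real.log M) + 6 := by
  have hM2 : (2:ℝ) ≤ (M:ℝ) := by exact_mod_cast hM
  have hL : 0 < Real.log M := Real.log_pos (by linarith)
  have hlog2 : (1:ℝ)/2 < Real.log 2 := by have := Real.log_two_gt_d9; linarith
  have hl2 : 0 < Real.log 2 := by linarith
  -- identify the prime sum with the weighted sum
  have hident : ∑ p ∈ (M + 1).primesBelow, 1 / (p:ℝ)
      = ∑ n ∈ Finset.Icc 2 M, wm n / Real.log n := by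
    rw [Nat.primesBelow, Finset.sum_filter]
    rw [← Finset.sum_subset (s₁ := Finset.Icc 2 M) (s₂ := Finset.range (M + 1))
      (by intro n hn; simp only [Finset.mem_Icc] at hn; exact Finset.mem_range.mpr (by omega))
      (fun n hn hn2 => ?_)]
    · apply Finset.sum_congr rfl
      intro n hn
      simp only [Finset.mem_Icc] at hn
      have hn2 : (2:ℝ) ≤ (n:ℝ) := by exact_mod_cast hn.1
      have hln : 0 < Real.log n := Real.log_pos (by linarith)
      unfold wm
      split_ifs with h
      · rw [div_div, mul_comm, ← div_div, div_self hln.ne']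
      · simp
    · simp only [Finset.mem_range, Finset.mem_Icc, not_and, not_le] at hn hn2
      have : n ≤ 1 := by omega
      have : ¬ n.Prime := by
        interval_cases n <;> decide
      simp [this]
  rw [hident]
  have habel := abel_bound M hM
  have hm1 := mertens1 M (by omega)
  have hT : Tm M / Real.log M ≤ 1 + Real.log 4 / Real.log M := by
    calc Tm M / Real.log M ≤ (Real.log M + Real.log 4) / Real.log M :=
          (div_le_div_iff_of_pos_right hL).mpr hm1
      _ = 1 + Real.log 4 / Real.log M := by
          rw [add_div, div_self hL.ne']
  have h4M : Real.log 4 / Real.log M ≤ 2 := by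
    rw [log_four, div_le_iff₀ hL]
    have : Real.log 2 ≤ Real.log M := Real.log_le_log (by norm_num) (by linarith)
    linarith
  have h42 : Real.log 4 * (1 / Real.log 2 - 1 / Real.log M) ≤ 2 := by
    have h1 : Real.log 4 * (1 / Real.log 2) = 2 := by
      rw [log_four]; field_simp
    have h2 : 0 ≤ Real.log 4 * (1 / Real.log M) := by
      have : (0:ℝ) ≤ Real.log 4 := by rw [log_four]; linarith
      positivity
    nlinarith
  linarith

lemma telescope_sum (N : ℕ) (hN : 1 ≤ N) :
    ∑ n ∈ Finset.Icc 2 N, (1/((n:ℝ)-1) - 1/n) = 1 - 1/(N:ℝ) := by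
  induction N, hN using Nat.le_induction with
  | base => simp
  | succ N hN ih =>
    rw [Finset.sum_Icc_succ_top (by omega : 2 ≤ N + 1), ih]
    have hN1 : (1:ℝ) ≤ (N:ℝ) := by exact_mod_cast hN
    push_cast
    simp only [add_sub_cancel_right]
    have h1 : (N:ℝ) ≠ 0 := by linarith
    have h2 : (N:ℝ) + 1 ≠ 0 := by linarith
    field_simp
    ring

lemma sum_primes_inv_sq (N : ℕ) : ∑ p ∈ N.primesBelow, 1/((p:ℝ))^2 ≤ 1 := by
  have hsub : N.primesBelow ⊆ Finset.Icc 2 N := by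
    intro p hp
    have h1 := (Nat.prime_of_mem_primesBelow hp).two_le
    have h2 := Nat.lt_of_mem_primesBelow hp
    exact Finset.mem_Icc.mpr ⟨h1, by omega⟩
  have step1 : ∑ p ∈ N.primesBelow, 1/((p:ℝ))^2 ≤ ∑ n ∈ Finset.Icc 2 N, 1/((n:ℝ))^2 := by
    apply Finset.sum_le_sum_of_subset_of_nonneg hsub
    intro n _ _
    positivity
  have step2 : ∑ n ∈ Finset.Icc 2 N, 1/((n:ℝ))^2
      ≤ ∑ n ∈ Finset.Icc 2 N, (1/((n:ℝ)-1) - 1/n) := by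
    apply Finset.sum_le_sum
    intro n hn
    have h2 : 2 ≤ n := (Finset.mem_Icc.mp hn).1
    have h2' : (2:ℝ) ≤ (n:ℝ) := by exact_mod_cast h2
    have ha : (0:ℝ) < (n:ℝ) - 1 := by linarith
    have hb : (0:ℝ) < (n:ℝ) := by linarith
    rw [div_sub_div _ _ ha.ne' hb.ne']
    rw [div_le_div_iff₀ (by positivity) (by positivity)]
    nlinarith
  have step3 : ∑ n ∈ Finset.Icc 2 N, (1/((n:ℝ)-1) - 1/n) ≤ 1 := by
    rcases Nat.eq_zero_or_pos N with h | h
    · subst h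
      norm_num
    · rw [telescope_sum N h]
      have hN1 : (0:ℝ) < (N:ℝ) := by exact_mod_cast h
      have : 0 < 1/(N:ℝ) := by positivity
      linarith
  linarith

lemma prod_bound (z : ℝ) (hz : 2 ≤ z) :
    ∏ p ∈ (⌊z⌋₊ + 1).primesBelow, (1 - (p:ℝ) ^ (1/(2*Real.log z) - 1))⁻¹
      ≤ Real.exp 27 * Real.log z := by
  set M := ⌊z⌋₊ with hMdef
  have hM2 : 2 ≤ M := Nat.le_floor (by exact_mod_cast hz)
  have hMz : (M:ℝ) ≤ z := Nat.floor_le (by linarith)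
  have hM2' : (2:ℝ) ≤ (M:ℝ) := by exact_mod_cast hM2
  have hlog2 : (1:ℝ)/2 < Real.log 2 := by have := Real.log_two_gt_d9; linarith
  have hlz : Real.log 2 ≤ Real.log z := Real.log_le_log (by norm_num) hz
  have hlz0 : 0 < Real.log z := by linarith
  set σ := 1/(2*Real.log z) with hσdef
  have hσ0 : 0 < σ := by positivity
  have hσlz : σ * Real.log z = 1/2 := by
    rw [hσdef]; field_simp
  have hσle : σ ≤ 1/(2*Real.log 2) := by
    rw [hσdef]
    apply one_div_le_one_div_of_le (by linarith) (by linarith)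
  have hσ1 : σ < 1 := by
    have : 1/(2*Real.log 2) < 1 := by
      rw [div_lt_one (by linarith)]; linarith
    linarith
  have hexp12 : Real.exp (1/2) ≤ 5/3 := by
    have h1 : Real.exp (1/2) * Real.exp (1/2) = Real.exp 1 := by
      rw [← Real.exp_add]; norm_num
    nlinarith [Real.exp_pos (1/2), Real.exp_one_lt_d9]
  -- per-prime facts
  have hfacts : ∀ p ∈ (M + 1).primesBelow,
      0 < (p:ℝ) ^ (σ - 1) ∧ (p:ℝ) ^ (σ - 1) ≤ 5/6 ∧
      (p:ℝ) ^ (σ - 1) ≤ 1/(p:ℝ) + (5/3) * σ * (Real.log p / p) ∧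
      ((p:ℝ) ^ (σ - 1))^2 ≤ 3 * (1/(p:ℝ)^2) := by
    intro p hp
    have hpp := Nat.prime_of_mem_primesBelow hp
    have hp2 : (2:ℝ) ≤ (p:ℝ) := by exact_mod_cast hpp.two_le
    have hp0 : (0:ℝ) < (p:ℝ) := by linarith
    have hpz : (p:ℝ) ≤ z := by
      have := Nat.lt_of_mem_primesBelow hp
      have hpM : p ≤ M := by omega
      have : (p:ℝ) ≤ (M:ℝ) := by exact_mod_cast hpM
      linarith
    have ht0 : 0 < (p:ℝ) ^ (σ - 1) := Real.rpow_pos_of_pos hp0 _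
    have htsub : (p:ℝ) ^ (σ - 1) = (p:ℝ) ^ σ / p := by
      rw [Real.rpow_sub hp0, Real.rpow_one]
    have hpσ : (p:ℝ) ^ σ = Real.exp (σ * Real.log p) := by
      rw [Real.rpow_def_of_pos hp0]
      try rw [mul_comm]
    have hy : σ * Real.log p ≤ 1/2 := by
      have h1 : Real.log p ≤ Real.log z := Real.log_le_log hp0 hpz
      have h2 : σ * Real.log p ≤ σ * Real.log z := by
        apply mul_le_mul_of_nonneg_left h1 hσ0.le
      linarith [hσlz]
    have hy0 : 0 ≤ σ * Real.log p := by
      have : 0 ≤ Real.log p := Real.log_nonneg (by linarith)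
      positivity
    have hexpy : Real.exp (σ * Real.log p) ≤ 5/3 := by
      calc Real.exp (σ * Real.log p) ≤ Real.exp (1/2) := Real.exp_le_exp.mpr hy
        _ ≤ 5/3 := hexp12
    have hpσ53 : (p:ℝ) ^ σ ≤ 5/3 := by rw [hpσ]; exact hexpy
    have ht56 : (p:ℝ) ^ (σ - 1) ≤ 5/6 := by
      rw [htsub]
      calc (p:ℝ) ^ σ / p ≤ (5/3) / p := by gcongr
        _ ≤ (5/3) / 2 := by gcongr
        _ = 5/6 := by norm_num
    refine ⟨ht0, ht56, ?_, ?_⟩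
    · -- p^σ ≤ 1 + (5/3) σ log p
      have key : Real.exp (σ * Real.log p) ≤ 1 + (5/3) * (σ * Real.log p) := by
        set y := σ * Real.log p with hy'
        have h1 : 1 + (-y) ≤ (Real.exp y)⁻¹ := by
          have := Real.add_one_le_exp (-y)
          rw [Real.exp_neg] at this
          linarith
        have h2 : Real.exp y ≤ 1 + y * Real.exp y := by
          have h3 := Real.exp_pos y
          have h4 : Real.exp y * (1 - y) ≤ 1 := by
            rcases le_or_gt (1 - y) 0 with h | h
            · nlinarith
            · have := mul_le_mul_of_nonneg_left h1 h3.le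
              rw [mul_inv_cancel₀ h3.ne'] at this
              nlinarith
          nlinarith
        nlinarith [Real.exp_pos y]
      rw [htsub, hpσ]
      rw [div_le_iff₀ hp0]
      have expand : (1/(p:ℝ) + (5/3) * σ * (Real.log p / p)) * p
          = 1 + (5/3) * (σ * Real.log p) := by
        field_simp
      rw [expand]
      exact key
    · -- square bound
      have hub : (p:ℝ) ^ (σ - 1) ≤ (5/3)/p := by
        rw [htsub]; gcongr
      have h1 : ((p:ℝ) ^ (σ - 1))^2 ≤ ((5/3)/p)^2 := by
        apply pow_le_pow_left₀ ht0.le hub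
      calc ((p:ℝ) ^ (σ - 1))^2 ≤ ((5/3)/p)^2 := h1
        _ = (25/9) * (1/(p:ℝ)^2) := by
            field_simp
            ring
        _ ≤ 3 * (1/(p:ℝ)^2) := by
            have h2 : (0:ℝ) < 1/(p:ℝ)^2 := by positivity
            nlinarith
  -- positivity of factors
  have hfactor_pos : ∀ p ∈ (M + 1).primesBelow, 0 < (1 - (p:ℝ) ^ (σ - 1))⁻¹ := by
    intro p hp
    obtain ⟨h0, h56, _, _⟩ := hfacts p hp
    have : 0 < 1 - (p:ℝ) ^ (σ - 1) := by linarith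
    positivity
  have hprod_pos : 0 < ∏ p ∈ (M + 1).primesBelow, (1 - (p:ℝ) ^ (σ - 1))⁻¹ :=
    Finset.prod_pos hfactor_pos
  -- log of the product
  have hlogprod : Real.log (∏ p ∈ (M + 1).primesBelow, (1 - (p:ℝ) ^ (σ - 1))⁻¹)
      = ∑ p ∈ (M + 1).primesBelow, Real.log ((1 - (p:ℝ) ^ (σ - 1))⁻¹) :=
    Real.log_prod (fun p hp => (hfactor_pos p hp).ne')
  -- per-term log bound
  have hterm : ∀ p ∈ (M + 1).primesBelow,
      Real.log ((1 - (p:ℝ) ^ (σ - 1))⁻¹)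
        ≤ 1/(p:ℝ) + (5/3) * σ * (Real.log p / p) + 18 * (1/(p:ℝ)^2) := by
    intro p hp
    obtain ⟨h0, h56, hlin, hsq⟩ := hfacts p hp
    set t := (p:ℝ) ^ (σ - 1) with htdef
    have h1t : 0 < 1 - t := by linarith
    have hlog_le : Real.log ((1 - t)⁻¹) ≤ (1 - t)⁻¹ - 1 :=
      Real.log_le_sub_one_of_pos (by positivity)
    have hinv : (1 - t)⁻¹ * (1 - t) = 1 := inv_mul_cancel₀ h1t.ne'
    have hquad : (1 - t)⁻¹ - 1 ≤ t + 6 * t^2 := by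
      have h6 : 1/6 ≤ 1 - t := by linarith
      nlinarith [h0]
    calc Real.log ((1 - t)⁻¹) ≤ t + 6 * t^2 := le_trans hlog_le hquad
      _ ≤ (1/(p:ℝ) + (5/3) * σ * (Real.log p / p)) + 6 * (3 * (1/(p:ℝ)^2)) := by
          nlinarith
      _ = 1/(p:ℝ) + (5/3) * σ * (Real.log p / p) + 18 * (1/(p:ℝ)^2) := by ring
  -- sum the bounds
  have hsum1 := mertens2 M hM2
  have hsum2 : ∑ p ∈ (M + 1).primesBelow, Real.log p / p ≤ Real.log M + Real.log 4 := by
    rw [← Tm_eq]; exact mertens1 M (by omega)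
  have hsum3 := sum_primes_inv_sq (M + 1)
  have hmain : ∑ p ∈ (M + 1).primesBelow, Real.log ((1 - (p:ℝ) ^ (σ - 1))⁻¹)
      ≤ Real.log (Real.log M) + 27 := by
    calc ∑ p ∈ (M + 1).primesBelow, Real.log ((1 - (p:ℝ) ^ (σ - 1))⁻¹)
        ≤ ∑ p ∈ (M + 1).primesBelow,
            (1/(p:ℝ) + (5/3) * σ * (Real.log p / p) + 18 * (1/(p:ℝ)^2)) :=
          Finset.sum_le_sum hterm
      _ = (∑ p ∈ (M + 1).primesBelow, 1/(p:ℝ))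
          + (5/3) * σ * (∑ p ∈ (M + 1).primesBelow, Real.log p / p)
          + 18 * (∑ p ∈ (M + 1).primesBelow, 1/(p:ℝ)^2) := by
          rw [Finset.sum_add_distrib, Finset.sum_add_distrib, Finset.mul_sum, Finset.mul_sum]
      _ ≤ (Real.log (Real.log M) + 6) + (5/3) * σ * (Real.log M + Real.log 4) + 18 * 1 := by
          have hnn : 0 ≤ (5/3) * σ := by positivity
          have h2 : (5/3) * σ * (∑ p ∈ (M + 1).primesBelow, Real.log p / p)
              ≤ (5/3) * σ * (Real.log M + Real.log 4) :=
            mul_le_mul_of_nonneg_left hsum2 hnn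
          have h3 : 18 * (∑ p ∈ (M + 1).primesBelow, 1/(p:ℝ)^2) ≤ 18 * 1 := by
            linarith [hsum3]
          linarith
      _ ≤ Real.log (Real.log M) + 27 := by
          have hσ4 : σ * (Real.log M + Real.log 4) ≤ 3/2 := by
            have h1 : Real.log M ≤ Real.log z := Real.log_le_log (by linarith) hMz
            have h2 : σ * Real.log M ≤ 1/2 := by
              have := mul_le_mul_of_nonneg_left h1 hσ0.le
              linarith [hσlz]
            have h3 : σ * Real.log 4 ≤ 1 := by
              rw [log_four]
              have : σ * (2 * Real.log 2) ≤ (1/(2*Real.log 2)) * (2 * Real.log 2) := by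
                apply mul_le_mul_of_nonneg_right hσle (by linarith)
              rw [one_div, inv_mul_cancel₀ (by linarith : (2*Real.log 2) ≠ 0)] at this
              linarith
            linarith
          nlinarith [hσ4]
  -- conclude
  have hllM : Real.log (Real.log M) ≤ Real.log (Real.log z) := by
    apply Real.log_le_log (Real.log_pos (by linarith))
    exact Real.log_le_log (by linarith) hMz
  calc ∏ p ∈ (M + 1).primesBelow, (1 - (p:ℝ) ^ (σ - 1))⁻¹
      = Real.exp (Real.log (∏ p ∈ (M + 1).primesBelow, (1 - (p:ℝ) ^ (σ - 1))⁻¹)) :=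
        (Real.exp_log hprod_pos).symm
    _ ≤ Real.exp (Real.log (Real.log z) + 27) := by
        apply Real.exp_le_exp.mpr
        rw [hlogprod]
        linarith [hmain, hllM]
    _ = Real.exp 27 * Real.log z := by
        rw [Real.exp_add, Real.exp_log hlz0]
        ring

theorem stmt_7 :
    ∃ C : ℝ, 0 < C ∧ ∀ (u x z : ℝ), 1 ≤ u → 1 < z → z ^ u ≤ x →
      ∑ a ∈ (Finset.Icc 1 ⌊x⌋₊).filter
          (fun a : ℕ => z ^ u < (a : ℝ) ∧ (a : ℝ) < x ∧
            ∀ p : ℕ, p ∈ a.primeFactors → (p : ℝ) ≤ z),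
        (1 : ℝ) / a
        ≤ C * Real.log z * Real.exp (-u / 2) := by
  refine ⟨Real.exp 27, Real.exp_pos 27, ?_⟩
  intro u x z hu hz hzx
  set A := (Finset.Icc 1 ⌊x⌋₊).filter
      (fun a : ℕ => z ^ u < (a : ℝ) ∧ (a : ℝ) < x ∧
        ∀ p : ℕ, p ∈ a.primeFactors → (p : ℝ) ≤ z) with hA
  have hz0 : (0:ℝ) < z := by linarith
  have hzu1 : (1:ℝ) < z ^ u := by
    calc (1:ℝ) = 1 ^ u := (Real.one_rpow u).symm
      _ < z ^ u := by
          apply Real.rpow_lt_rpow (by norm_num) hz (by linarith)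
  have hRHS0 : 0 ≤ Real.exp 27 * Real.log z * Real.exp (-u / 2) := by
    have h1 : 0 < Real.log z := Real.log_pos hz
    positivity
  by_cases hz2 : 2 ≤ z
  · -- main case
    set M := ⌊z⌋₊ with hMdef
    have hM2 : 2 ≤ M := Nat.le_floor (by exact_mod_cast hz2)
    have hlog2 : (1:ℝ)/2 < Real.log 2 := by have := Real.log_two_gt_d9; linarith
    have hlz : Real.log 2 ≤ Real.log z := Real.log_le_log (by norm_num) hz2
    have hlz0 : 0 < Real.log z := by linarith
    set σ := 1/(2*Real.log z) with hσdef
    have hσ0 : 0 < σ := by positivity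
    have hσlz : σ * Real.log z = 1/2 := by rw [hσdef]; field_simp
    have hσ1 : σ - 1 < 0 := by
      have : σ ≤ 1/(2*Real.log 2) :=
        one_div_le_one_div_of_le (by linarith) (by linarith)
      have : 1/(2*Real.log 2) < 1 := by
        rw [div_lt_one (by linarith)]; linarith
      linarith
    -- multiplicative function
    set f : ℕ →* ℝ :=
      { toFun := fun n => (n:ℝ) ^ (σ - 1),
        map_one' := by simp
        map_mul' := fun m n => by
          push_cast
          exact Real.mul_rpow (Nat.cast_nonneg m) (Nat.cast_nonneg n) } with hfdef
    have hfval : ∀ n : ℕ, f n = (n:ℝ) ^ (σ - 1) := fun n => rfl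
    have h1 : ∀ {p : ℕ}, p.Prime → ‖f p‖ < 1 := by
      intro p hp
      have hp1 : (1:ℝ) < p := by exact_mod_cast hp.one_lt
      have hpos : 0 < (p:ℝ) ^ (σ - 1) := Real.rpow_pos_of_pos (by linarith) _
      rw [hfval, Real.norm_eq_abs, abs_of_pos hpos]
      exact Real.rpow_lt_one_of_one_lt_of_neg hp1 hσ1
    obtain ⟨hsumm, hhas⟩ :=
      EulerProduct.summable_and_hasSum_smoothNumbers_prod_primesBelow_geometric h1 (M + 1)
    have htsum : ∑' m : (M + 1).smoothNumbers, f m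
        = ∏ p ∈ (M + 1).primesBelow, (1 - f p)⁻¹ := hhas.tsum_eq
    -- A consists of smooth numbers
    have hAsub : ∀ a ∈ A, a ∈ (M + 1).smoothNumbers := by
      intro a ha
      rw [hA, Finset.mem_filter] at ha
      obtain ⟨haI, _, _, hsm⟩ := ha
      have ha1 : 1 ≤ a := (Finset.mem_Icc.mp haI).1
      rw [Nat.mem_smoothNumbers']
      intro p hp hdvd
      have hpf : p ∈ a.primeFactors := Nat.mem_primeFactors.mpr ⟨hp, hdvd, by omega⟩
      have := hsm p hpf
      have : p ≤ M := Nat.le_floor this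
      omega
    -- nonnegativity of f
    have hf0 : ∀ n : ℕ, 0 ≤ f n := by
      intro n
      rw [hfval]
      positivity
    -- sum over A is at most the tsum over smooth numbers
    have hsubtype : Summable (fun m : (M + 1).smoothNumbers => f m) := hsumm.of_norm
    have hind : Summable (Set.indicator ((M + 1).smoothNumbers) (fun n => f n)) := by
      rwa [← summable_subtype_iff_indicator]
    have hsumA : ∑ a ∈ A, f a ≤ ∏ p ∈ (M + 1).primesBelow, (1 - f p)⁻¹ := by
      rw [← htsum]
      calc ∑ a ∈ A, f a
          = ∑ a ∈ A, Set.indicator ((M + 1).smoothNumbers) (fun n => f n) a := by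
            apply Finset.sum_congr rfl
            intro a ha
            rw [Set.indicator_of_mem (hAsub a ha)]
        _ ≤ ∑' n, Set.indicator ((M + 1).smoothNumbers) (fun n => f n) n := by
            apply Summable.sum_le_tsum A ?_ hind
            intro n _
            exact Set.indicator_nonneg (fun m _ => hf0 m) n
        _ = ∑' m : (M + 1).smoothNumbers, f m :=
            (_root_.tsum_subtype ((M + 1).smoothNumbers) (fun n => f n)).symm
    -- pointwise bound on A
    have hterm : ∀ a ∈ A, (1:ℝ)/a ≤ Real.exp (-u/2) * f a := by
      intro a ha
      rw [hA, Finset.mem_filter] at ha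
      obtain ⟨haI, hau, _, _⟩ := ha
      have ha1 : 1 ≤ a := (Finset.mem_Icc.mp haI).1
      have haR : (1:ℝ) ≤ (a:ℝ) := by exact_mod_cast ha1
      have ha0 : (0:ℝ) < (a:ℝ) := by linarith
      have hzupos : (0:ℝ) < z ^ u := Real.rpow_pos_of_pos hz0 u
      have hkey : Real.exp (u/2) ≤ (a:ℝ) ^ σ := by
        have h1 : (z ^ u) ^ σ ≤ (a:ℝ) ^ σ :=
          Real.rpow_le_rpow hzupos.le hau.le hσ0.le
        have h2 : (z ^ u) ^ σ = Real.exp (u/2) := by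
          rw [← Real.rpow_mul hz0.le, Real.rpow_def_of_pos hz0]
          congr 1
          rw [mul_comm]
          calc u * σ * Real.log z = u * (σ * Real.log z) := by ring
            _ = u / 2 := by rw [hσlz]; ring
        linarith [h2 ▸ h1]
      have hfa : f a = (a:ℝ) ^ σ / a := by
        rw [hfval, Real.rpow_sub ha0, Real.rpow_one]
      have hdiv : Real.exp (u/2) / a ≤ (a:ℝ) ^ σ / a := by gcongr
      have hexp : Real.exp (-u/2) * Real.exp (u/2) = 1 := by
        rw [← Real.exp_add]; ring_nf; exact Real.exp_zero
      calc (1:ℝ)/a = Real.exp (-u/2) * (Real.exp (u/2) / a) := by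
            rw [← mul_div_assoc, hexp]
        _ ≤ Real.exp (-u/2) * ((a:ℝ) ^ σ / a) := by
            apply mul_le_mul_of_nonneg_left hdiv (Real.exp_pos _).le
        _ = Real.exp (-u/2) * f a := by rw [hfa]
    -- product bound
    have hprod : ∏ p ∈ (M + 1).primesBelow, (1 - f p)⁻¹ ≤ Real.exp 27 * Real.log z := by
      have := prod_bound z hz2
      rw [← hσdef, ← hMdef] at this
      convert this using 2
      rfl
    -- combine
    have hsum0 : 0 ≤ ∑ a ∈ A, f a := Finset.sum_nonneg fun a _ => hf0 a
    calc ∑ a ∈ A, (1:ℝ)/a ≤ ∑ a ∈ A, Real.exp (-u/2) * f a := Finset.sum_le_sum hterm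
      _ = Real.exp (-u/2) * ∑ a ∈ A, f a := by rw [Finset.mul_sum]
      _ ≤ Real.exp (-u/2) * (Real.exp 27 * Real.log z) := by
          apply mul_le_mul_of_nonneg_left (hsumA.trans hprod) (Real.exp_pos _).le
      _ = Real.exp 27 * Real.log z * Real.exp (-u / 2) := by ring
  · -- z < 2 : the sum is empty
    have hAempty : A = ∅ := by
      rw [hA]
      rw [Finset.filter_eq_empty_iff]
      intro a haI
      rintro ⟨hau, -, hsm⟩
      have ha1 : 1 ≤ a := (Finset.mem_Icc.mp haI).1
      have hpf : a.primeFactors = ∅ := by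
        by_contra h
        obtain ⟨p, hp⟩ := Finset.nonempty_iff_ne_empty.mpr h
        have hple := hsm p hp
        have hp2 : 2 ≤ p := (Nat.prime_of_mem_primeFactors hp).two_le
        have : (2:ℝ) ≤ (p:ℝ) := by exact_mod_cast hp2
        linarith [lt_of_not_ge hz2]
      have ha : a = 1 := by
        rcases (Nat.primeFactors_eq_empty.mp hpf) with h | h
        · omega
        · exact h
      rw [ha] at hau
      push_cast at hau
      linarith
    rw [hAempty]
    simpa using hRHS0
end

section
/- Let λ be the Liouville function, χ a quadratic Dirichlet character mod q, z > 1, and let λ_z be the completely multiplicative function with λ_z(p) = λ(p) for primes p ≤ z and λ_z(p) = χ(p) for primes p > z. Then for x > z, Σ_{n ≤ x} |λ(n) − λ_z(n)| ≪ x·Σ_{z < p ≤ x} (1 + χ(p))/p + x/z, with an absolute implied constant. -/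
/-- The Liouville function `λ(n) = (-1)^Ω(n)`. -/
noncomputable def liouville (n : ℕ) : ℝ := (-1) ^ (Nat.primeFactorsList n).length

lemma liouville_one' : liouville 1 = 1 := by simp [liouville]

lemma liouville_mul' {m n : ℕ} (hm : m ≠ 0) (hn : n ≠ 0) :
    liouville (m * n) = liouville m * liouville n := by
  unfold liouville
  rw [(Nat.perm_primeFactorsList_mul hm hn).length_eq, List.length_append, pow_add]

lemma abs_liouville' (n : ℕ) : |liouville n| = 1 := by
  simp [liouville, abs_pow]

theorem stmt_13 :
    ∃ C : ℝ, 0 < C ∧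
      ∀ (q : ℕ) (χ : DirichletCharacter ℝ q) (_hq : 1 ≤ q) (_hχ : χ ^ 2 = 1)
        (z : ℝ) (_hz : 1 < z) (lamz : ℕ → ℝ)
        (_hone : lamz 1 = 1)
        (_hmul : ∀ m n : ℕ, lamz (m * n) = lamz m * lamz n)
        (_hsmall : ∀ p : ℕ, p.Prime → (p : ℝ) ≤ z → lamz p = liouville p)
        (_hlarge : ∀ p : ℕ, p.Prime → z < (p : ℝ) → lamz p = χ (p : ZMod q))
        (x : ℝ) (_hx : z < x),
        ∑ n ∈ Finset.Icc 1 ⌊x⌋₊, |liouville n - lamz n| ≤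
          C * (x * ∑ p ∈ (Finset.Icc 1 ⌊x⌋₊).filter
                (fun p : ℕ => p.Prime ∧ z < (p : ℝ)),
              (1 + χ (p : ZMod q)) / (p : ℝ)
            + x / z) := by
  classical
  refine ⟨2, by norm_num, ?_⟩
  intro q χ _hq hχ z hz lamz hone hmul hsmall hlarge x hx
  have hx0 : (0:ℝ) < x := lt_trans (by linarith) hx
  -- values of χ
  have hχval : ∀ a : ZMod q, χ a = 1 ∨ χ a = -1 ∨ χ a = 0 := by
    intro a
    by_cases ha : IsUnit a
    · have h2 : χ a * χ a = 1 := by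
        have := congrArg (fun ψ : DirichletCharacter ℝ q => ψ a) hχ
        simpa [pow_two, MulChar.one_apply ha] using this
      rcases mul_self_eq_one_iff.mp h2 with h | h
      · exact Or.inl h
      · exact Or.inr (Or.inl h)
    · exact Or.inr (Or.inr (χ.map_nonunit ha))
  -- |lamz n| ≤ 1
  have habs : ∀ n : ℕ, 0 < n → |lamz n| ≤ 1 := by
    intro n
    induction n using Nat.strong_induction_on with
    | _ n ih =>
      intro hn
      rcases eq_or_lt_of_le (show 1 ≤ n from hn) with h1 | h1
      · rw [← h1, hone]; norm_num
      · have hp := Nat.minFac_prime (by omega : n ≠ 1)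
        obtain ⟨m, hm⟩ := Nat.minFac_dvd n
        set p := n.minFac with hpdef
        have hm0 : 0 < m := by
          rcases Nat.eq_zero_or_pos m with h | h
          · subst h; omega
          · exact h
        have hmlt : m < n := by
          have h2 : 2 ≤ p := hp.two_le
          nlinarith
        have h1p : |lamz p| ≤ 1 := by
          by_cases hpz : (p:ℝ) ≤ z
          · rw [hsmall p hp hpz, abs_liouville']
          · rw [hlarge p hp (lt_of_not_ge hpz)]
            rcases hχval (p : ZMod q) with h | h | h <;> rw [h] <;> norm_num
        calc |lamz n| = |lamz p * lamz m| := by rw [hm, hmul]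
          _ = |lamz p| * |lamz m| := abs_mul _ _
          _ ≤ 1 * 1 := mul_le_mul h1p (ih m hmlt hm0) (abs_nonneg _) zero_le_one
          _ = 1 := one_mul 1
  -- if n has no bad prime factor then lamz n = liouville n
  have hgood : ∀ n : ℕ, 0 < n →
      (∀ p : ℕ, p.Prime → p ∣ n → ((p:ℝ) ≤ z ∨ χ (p : ZMod q) = -1)) →
      lamz n = liouville n := by
    intro n
    induction n using Nat.strong_induction_on with
    | _ n ih =>
      intro hn hall
      rcases eq_or_lt_of_le (show 1 ≤ n from hn) with h1 | h1
      · rw [← h1, hone, liouville_one']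
      · have hp := Nat.minFac_prime (by omega : n ≠ 1)
        obtain ⟨m, hm⟩ := Nat.minFac_dvd n
        set p := n.minFac with hpdef
        have hm0 : 0 < m := by
          rcases Nat.eq_zero_or_pos m with h | h
          · subst h; omega
          · exact h
        have hmlt : m < n := by
          have h2 : 2 ≤ p := hp.two_le
          nlinarith
        have hlp : lamz p = liouville p := by
          by_cases hpz : (p:ℝ) ≤ z
          · exact hsmall p hp hpz
          · rw [hlarge p hp (lt_of_not_ge hpz)]
            have hneg : χ (p : ZMod q) = -1 :=
              (hall p hp ⟨m, hm⟩).resolve_left hpz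
            rw [hneg, liouville, Nat.primeFactorsList_prime hp]
            norm_num
        have hlm : lamz m = liouville m :=
          ih m hmlt hm0 (fun r hr hrm => hall r hr (by rw [hm]; exact hrm.mul_left p))
        rw [hm, hmul, hlp, hlm, liouville_mul' hp.pos.ne' hm0.ne']
  -- notation
  set N := ⌊x⌋₊ with hN
  set S := Finset.Icc 1 N with hS
  set P := S.filter (fun p : ℕ => p.Prime ∧ z < (p : ℝ)) with hP
  set bad : ℕ → Prop := fun n => ∃ p : ℕ, p.Prime ∧ p ∣ n ∧ z < (p:ℝ) ∧ χ (p : ZMod q) ≠ -1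
    with hbad
  set P' := P.filter (fun p : ℕ => χ (p : ZMod q) ≠ -1) with hP'
  have hNx : (N : ℝ) ≤ x := Nat.floor_le hx0.le
  -- Step A
  have stepA : ∑ n ∈ S, |liouville n - lamz n| ≤ 2 * ((S.filter bad).card : ℝ) := by
    have : ∑ n ∈ S, |liouville n - lamz n| ≤ ∑ n ∈ S, (if bad n then (2:ℝ) else 0) := by
      apply Finset.sum_le_sum
      intro n hn
      have hn1 : 1 ≤ n := (Finset.mem_Icc.mp hn).1
      by_cases hb : bad n
      · rw [if_pos hb]
        calc |liouville n - lamz n| ≤ |liouville n| + |lamz n| := abs_sub _ _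
          _ ≤ 1 + 1 := add_le_add (le_of_eq (abs_liouville' n)) (habs n hn1)
          _ = 2 := by norm_num
      · rw [if_neg hb]
        have hall : ∀ p : ℕ, p.Prime → p ∣ n → ((p:ℝ) ≤ z ∨ χ (p : ZMod q) = -1) := by
          intro r hr hrn
          by_contra hcon
          push_neg at hcon
          exact hb ⟨r, hr, hrn, hcon.1, hcon.2⟩
        rw [hgood n hn1 hall, sub_self, abs_zero]
    rw [← Finset.sum_filter] at this
    simpa [Finset.sum_const, nsmul_eq_mul, mul_comm] using this
  -- Step B : bad set is covered by multiples of primes in P'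
  have stepB : (S.filter bad).card ≤ ∑ p ∈ P', N / p := by
    have hsub : S.filter bad ⊆ P'.biUnion (fun p => S.filter (fun n => p ∣ n)) := by
      intro n hn
      rw [Finset.mem_filter] at hn
      obtain ⟨hnS, p, hp, hpn, hpz, hpχ⟩ := hn
      have hn1 : 1 ≤ n := (Finset.mem_Icc.mp hnS).1
      have hnN : n ≤ N := (Finset.mem_Icc.mp hnS).2
      have hpN : p ≤ N := le_trans (Nat.le_of_dvd (by omega) hpn) hnN
      rw [Finset.mem_biUnion]
      refine ⟨p, ?_, ?_⟩
      · rw [hP', Finset.mem_filter, hP, Finset.mem_filter]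
        exact ⟨⟨Finset.mem_Icc.mpr ⟨hp.one_lt.le, hpN⟩, hp, hpz⟩, hpχ⟩
      · exact Finset.mem_filter.mpr ⟨hnS, hpn⟩
    calc (S.filter bad).card ≤ (P'.biUnion (fun p => S.filter (fun n => p ∣ n))).card :=
          Finset.card_le_card hsub
      _ ≤ ∑ p ∈ P', (S.filter (fun n => p ∣ n)).card := Finset.card_biUnion_le
      _ = ∑ p ∈ P', N / p := by
          apply Finset.sum_congr rfl
          intro p _
          have : S = Finset.Ioc 0 N := rfl
          rw [this, Nat.Ioc_filter_dvd_card_eq_div]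
  -- Step C : compare with the real sum
  have hterm_nonneg : ∀ p ∈ P, (0:ℝ) ≤ x * ((1 + χ (p : ZMod q)) / (p : ℝ)) := by
    intro p hp
    rw [hP, Finset.mem_filter] at hp
    have hp2 := hp.2.1.two_le
    have hpos : (0:ℝ) < (p:ℝ) := by exact_mod_cast Nat.lt_of_lt_of_le Nat.zero_lt_two hp2
    have h1 : (0:ℝ) ≤ 1 + χ (p : ZMod q) := by
      rcases hχval (p : ZMod q) with h | h | h <;> rw [h] <;> norm_num
    positivity
  have stepC : (∑ p ∈ P', (N / p : ℕ) : ℝ) ≤ ∑ p ∈ P, x * ((1 + χ (p : ZMod q)) / (p : ℝ)) := by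
    have h1 : (∑ p ∈ P', (N / p : ℕ) : ℝ) =
        ∑ p ∈ P', ((N / p : ℕ) : ℝ) := by push_cast; ring
    rw [h1]
    have h2 : ∀ p ∈ P', ((N / p : ℕ) : ℝ) ≤ x * ((1 + χ (p : ZMod q)) / (p : ℝ)) := by
      intro p hp
      rw [hP', Finset.mem_filter] at hp
      obtain ⟨hpP, hpχ⟩ := hp
      rw [hP, Finset.mem_filter] at hpP
      have hprime := hpP.2.1
      have hpos : (0:ℝ) < (p:ℝ) := by exact_mod_cast hprime.pos
      have h1χ : (1:ℝ) ≤ 1 + χ (p : ZMod q) := by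
        rcases hχval (p : ZMod q) with h | h | h
        · rw [h]; norm_num
        · exact absurd h hpχ
        · rw [h]; norm_num
      calc ((N / p : ℕ) : ℝ) ≤ (N : ℝ) / (p : ℝ) := Nat.cast_div_le
        _ ≤ x / (p : ℝ) := by gcongr
        _ = x * (1 / (p : ℝ)) := by ring
        _ ≤ x * ((1 + χ (p : ZMod q)) / (p : ℝ)) := by
            apply mul_le_mul_of_nonneg_left _ hx0.le
            gcongr
    calc ∑ p ∈ P', ((N / p : ℕ) : ℝ) ≤ ∑ p ∈ P', x * ((1 + χ (p : ZMod q)) / (p : ℝ)) :=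
          Finset.sum_le_sum h2
      _ ≤ ∑ p ∈ P, x * ((1 + χ (p : ZMod q)) / (p : ℝ)) := by
          apply Finset.sum_le_sum_of_subset_of_nonneg (Finset.filter_subset _ _)
          intro p hp _
          exact hterm_nonneg p hp
  -- put everything together
  have hxz : (0:ℝ) < x / z := div_pos hx0 (by linarith)
  calc ∑ n ∈ S, |liouville n - lamz n|
      ≤ 2 * ((S.filter bad).card : ℝ) := stepA
    _ ≤ 2 * (∑ p ∈ P', (N / p : ℕ) : ℝ) := by
        have : ((S.filter bad).card : ℝ) ≤ (∑ p ∈ P', (N / p : ℕ) : ℝ) := by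
          exact_mod_cast stepB
        linarith
    _ ≤ 2 * ∑ p ∈ P, x * ((1 + χ (p : ZMod q)) / (p : ℝ)) := by linarith [stepC]
    _ = 2 * (x * ∑ p ∈ P, (1 + χ (p : ZMod q)) / (p : ℝ)) := by
        simp only [Finset.mul_sum]
    _ ≤ 2 * (x * ∑ p ∈ P, (1 + χ (p : ZMod q)) / (p : ℝ) + x / z) := by linarith
end
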